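/- arXiv:1606.03573 — 7 statements merged into one kernel-verified Lean document; each statement's English description precedes it below -/
import Mathlib

section
/- In the shorthand of the paper: ∑_{j=1}^b g(x_k, v^C_j) Ω_{a+j} = g(x_k, v̄^C)/g(x_k, v̄^B) - 1, where Ω_{a+j} = (1/g(v^C_j, v̄^B)) ∏_{k≠j} g(v^C_j, v^C_k), g(u,v)=c/(u-v), and g of a set denotes the product over its elements. -/
open Finset Polynomial

noncomputable def gg (c u v : ℂ) : ℂ := c / (u - v)

theorem sum_g_Omega (c : ℂ) (hc : c ≠ 0) (b : ℕ) (hb : 1 ≤ b) (x : ℂ)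
    (vB vC : Fin b → ℂ) (hvC : Function.Injective vC)
    (hxC : ∀ j, x ≠ vC j) (hxB : ∀ l, x ≠ vB l) (hCB : ∀ j l, vC j ≠ vB l) :
    ∑ j, gg c x (vC j) *
        ((1 / ∏ l, gg c (vC j) (vB l)) * ∏ k ∈ univ.erase j, gg c (vC j) (vC k)) =
      (∏ l, gg c x (vC l)) / (∏ l, gg c x (vB l)) - 1 := by
  -- polynomials
  set P : ℂ[X] := ∏ l : Fin b, (X - C (vB l)) with hP
  set Q : ℂ[X] := ∏ l : Fin b, (X - C (vC l)) with hQ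
  have hPm : P.Monic := monic_prod_of_monic _ _ fun _ _ => monic_X_sub_C _
  have hQm : Q.Monic := monic_prod_of_monic _ _ fun _ _ => monic_X_sub_C _
  have hPd : P.degree = b := by
    simp [hP, Polynomial.degree_prod, Polynomial.degree_X_sub_C]
  have hQd : Q.degree = b := by
    simp [hQ, Polynomial.degree_prod, Polynomial.degree_X_sub_C]
  have hdf : (P - Q).degree < (univ : Finset (Fin b)).card := by
    have := Polynomial.degree_sub_lt (hPd.trans hQd.symm) hPm.ne_zero
      (by rw [hPm.leadingCoeff, hQm.leadingCoeff])
    simpa [hPd] using this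
  have hinj : Set.InjOn vC ↑(univ : Finset (Fin b)) := fun a _ a' _ h => hvC h
  have hint := Lagrange.eq_interpolate (v := vC) hinj hdf
  -- evaluate at x
  have hQj : ∀ j : Fin b, Q.eval (vC j) = 0 := fun j => by
    rw [hQ, Polynomial.eval_prod]
    exact Finset.prod_eq_zero (mem_univ j) (by simp)
  have key : ∑ j : Fin b, P.eval (vC j) *
      ∏ k ∈ univ.erase j, ((vC j - vC k)⁻¹ * (x - vC k)) = P.eval x - Q.eval x := by
    have := congrArg (Polynomial.eval x) hint
    rw [Lagrange.interpolate_apply] at this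
    simp only [Polynomial.eval_finset_sum, Polynomial.eval_mul, Polynomial.eval_C,
      Polynomial.eval_sub, Lagrange.basis, Polynomial.eval_prod,
      Lagrange.basisDivisor, hQj, sub_zero] at this
    rw [Polynomial.eval_X] at this
    exact this.symm
  -- scalar rewrites
  have hQx : (∏ l, gg c x (vC l)) = c ^ b / Q.eval x := by
    simp [gg, hQ, Polynomial.eval_prod, Finset.prod_div_distrib, Finset.prod_const]
  have hPx : (∏ l, gg c x (vB l)) = c ^ b / P.eval x := by
    simp [gg, hP, Polynomial.eval_prod, Finset.prod_div_distrib, Finset.prod_const]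
  have hQxne : Q.eval x ≠ 0 := by
    rw [hQ, Polynomial.eval_prod]
    exact Finset.prod_ne_zero_iff.2 fun i _ => by
      simpa using sub_ne_zero.2 (hxC i)
  have hPxne : P.eval x ≠ 0 := by
    rw [hP, Polynomial.eval_prod]
    exact Finset.prod_ne_zero_iff.2 fun i _ => by
      simpa using sub_ne_zero.2 (hxB i)
  -- LHS termwise
  have hterm : ∀ j : Fin b, gg c x (vC j) *
      ((1 / ∏ l, gg c (vC j) (vB l)) * ∏ k ∈ univ.erase j, gg c (vC j) (vC k)) =
      (P.eval (vC j) * ∏ k ∈ univ.erase j, ((vC j - vC k)⁻¹ * (x - vC k))) / Q.eval x := by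
    intro j
    have hDj : ∀ k ∈ univ.erase j, vC j - vC k ≠ 0 := fun k hk =>
      sub_ne_zero.2 fun h => (mem_erase.1 hk).1 (hvC h.symm)
    have hDjne : (∏ k ∈ univ.erase j, (vC j - vC k)) ≠ 0 :=
      Finset.prod_ne_zero_iff.2 hDj
    have hPvj : (∏ l, (vC j - vB l)) ≠ 0 :=
      Finset.prod_ne_zero_iff.2 fun l _ => sub_ne_zero.2 (hCB j l)
    have hxj : x - vC j ≠ 0 := sub_ne_zero.2 (hxC j)
    have hQsplit : Q.eval x = (x - vC j) * ∏ k ∈ univ.erase j, (x - vC k) := by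
      rw [hQ, Polynomial.eval_prod]
      simp only [Polynomial.eval_sub, Polynomial.eval_X, Polynomial.eval_C]
      exact (Finset.mul_prod_erase _ _ (mem_univ j)).symm
    have hPj : P.eval (vC j) = ∏ l, (vC j - vB l) := by
      simp [hP, Polynomial.eval_prod]
    have hcard : (univ.erase j).card = b - 1 := by
      simp [Finset.card_erase_of_mem]
    have hEne : (∏ k ∈ univ.erase j, (x - vC k)) ≠ 0 :=
      Finset.prod_ne_zero_iff.2 fun k _ => sub_ne_zero.2 (hxC k)
    have hcc : c * c ^ (b - 1) = c ^ b := by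
      rw [← pow_succ', Nat.sub_add_cancel hb]
    rw [hPj]
    simp only [gg, Finset.prod_div_distrib, Finset.prod_const, Finset.card_univ,
      Fintype.card_fin, hcard, Finset.prod_mul_distrib, Finset.prod_inv_distrib]
    rw [hQsplit, one_div_div, div_mul_div_comm, div_mul_div_comm,
      div_eq_div_iff (mul_ne_zero hxj (mul_ne_zero (pow_ne_zero _ hc) hDjne))
        (mul_ne_zero hxj hEne), ← hcc]
    linear_combination (-(c * c ^ (b - 1) * (∏ l, (vC j - vB l)) * (x - vC j) *
      ∏ k ∈ univ.erase j, (x - vC k))) * inv_mul_cancel₀ hDjne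
  calc ∑ j, gg c x (vC j) *
        ((1 / ∏ l, gg c (vC j) (vB l)) * ∏ k ∈ univ.erase j, gg c (vC j) (vC k))
      = ∑ j, (P.eval (vC j) * ∏ k ∈ univ.erase j, ((vC j - vC k)⁻¹ * (x - vC k))) / Q.eval x :=
        Finset.sum_congr rfl fun j _ => hterm j
    _ = (∑ j : Fin b, P.eval (vC j) * ∏ k ∈ univ.erase j, ((vC j - vC k)⁻¹ * (x - vC k))) / Q.eval x := by
        rw [Finset.sum_div]
    _ = (P.eval x - Q.eval x) / Q.eval x := by rw [key]
    _ = (∏ l, gg c x (vC l)) / (∏ l, gg c x (vB l)) - 1 := by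
        rw [hQx, hPx]
        field_simp
end

section
/- With h(u,v)=(u-v+c)/c: ∑_{j=1}^b Ω_{a+j}/h(v^C_j, x_k) = 1 - h(v̄^B, x_k)/h(v̄^C, x_k), where Ω_{a+j} = (1/g(v^C_j, v̄^B)) ∏_{l≠j} g(v^C_j, v^C_l) and h of a set is the product over its elements. -/
open Finset

noncomputable def hh (c u v : ℂ) : ℂ := (u - v + c) / c

open Polynomial Lagrange in
lemma key_partial_fraction (b : ℕ) (vB vC : Fin b → ℂ) (hvC : Function.Injective vC) (y : ℂ)
    (hy : ∀ l, vC l - y ≠ 0) :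
    ∑ j, (∏ l, (vC j - vB l)) / (∏ l ∈ univ.erase j, (vC j - vC l)) / (vC j - y)
      = 1 - (∏ l, (y - vB l)) / (∏ l, (y - vC l)) := by
  have hy' : ∀ l, y - vC l ≠ 0 := fun l h => hy l (by linear_combination -h)
  set P : ℂ[X] := ∏ l, (X - C (vB l)) with hP
  set Q : ℂ[X] := ∏ l, (X - C (vC l)) with hQ
  have hPm : P.Monic := monic_prod_of_monic _ _ fun _ _ => monic_X_sub_C _
  have hQm : Q.Monic := monic_prod_of_monic _ _ fun _ _ => monic_X_sub_C _
  have hPd : P.natDegree = b := by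
    rw [hP, natDegree_prod_of_monic _ _ fun _ _ => monic_X_sub_C _]
    simp
  have hQd : Q.natDegree = b := by
    rw [hQ, natDegree_prod_of_monic _ _ fun _ _ => monic_X_sub_C _]
    simp
  have hdeg : (P - Q).degree < (b : WithBot ℕ) := by
    have h1 : P.degree = Q.degree := by
      rw [degree_eq_natDegree hPm.ne_zero, degree_eq_natDegree hQm.ne_zero, hPd, hQd]
    have h2 := degree_sub_lt h1 hPm.ne_zero (hPm.leadingCoeff.trans hQm.leadingCoeff.symm)
    rwa [degree_eq_natDegree hPm.ne_zero, hPd] at h2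
  have hint := Lagrange.eq_interpolate (s := (univ : Finset (Fin b))) (v := vC) (f := P - Q)
    hvC.injOn (by simpa using hdeg)
  have heval := congrArg (eval y) hint
  simp only [interpolate_apply, eval_finset_sum, eval_mul, eval_C, Lagrange.basis,
    Lagrange.basisDivisor, eval_prod, eval_sub, eval_X, hP, hQ] at heval
  have hz : ∀ j : Fin b, (∏ l, (vC j - vC l)) = 0 := fun j => prod_eq_zero (mem_univ j) (by simp)
  simp only [hz, sub_zero] at heval
  have hD : (∏ l, (y - vC l)) ≠ 0 := prod_ne_zero_iff.2 fun l _ => hy' l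
  have hterm : ∀ j : Fin b, ((∏ l, (vC j - vB l)) / ∏ l ∈ univ.erase j, (vC j - vC l)) / (vC j - y)
      = -(((∏ l, (vC j - vB l)) * ∏ l ∈ univ.erase j, ((vC j - vC l)⁻¹ * (y - vC l))) / ∏ l, (y - vC l)) := by
    intro j
    have hDj : (∏ l ∈ univ.erase j, (vC j - vC l)) ≠ 0 :=
      prod_ne_zero_iff.2 fun l hl => sub_ne_zero.2 fun h => (mem_erase.1 hl).1 (hvC h).symm
    have hEj : (∏ l ∈ univ.erase j, (y - vC l)) ≠ 0 := prod_ne_zero_iff.2 fun l _ => hy' l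
    rw [prod_mul_distrib, prod_inv_distrib,
      ← Finset.mul_prod_erase univ (fun l => (y - vC l)) (mem_univ j)]
    field_simp [hDj, hEj, hy j, hy' j]
    ring
  simp only [hterm, ← neg_div]
  rw [← sum_div, sum_neg_distrib, ← heval]
  field_simp
  ring

theorem sum_invh_Omega (c : ℂ) (hc : c ≠ 0) (b : ℕ) (hb : 1 ≤ b) (x : ℂ)
    (vB vC : Fin b → ℂ) (hvC : Function.Injective vC)
    (hCB : ∀ j l, vC j ≠ vB l)
    (hhC : ∀ l, vC l - x + c ≠ 0) :
    ∑ j, ((1 / ∏ l, gg c (vC j) (vB l)) * ∏ l ∈ univ.erase j, gg c (vC j) (vC l)) /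
        hh c (vC j) x =
      1 - (∏ l, hh c (vB l) x) / (∏ l, hh c (vC l) x) := by
  have hy : ∀ l, vC l - (x - c) ≠ 0 := fun l h => hhC l (by linear_combination h)
  have hK := key_partial_fraction b vB vC hvC (x - c) hy
  have hterm : ∀ j : Fin b,
      ((1 / ∏ l, gg c (vC j) (vB l)) * ∏ l ∈ univ.erase j, gg c (vC j) (vC l)) / hh c (vC j) x
      = (∏ l, (vC j - vB l)) / (∏ l ∈ univ.erase j, (vC j - vC l)) / (vC j - (x - c)) := by
    intro j
    have h1 : (∏ l, (vC j - vB l)) ≠ 0 := prod_ne_zero_iff.2 fun l _ => sub_ne_zero.2 (hCB j l)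
    have h2 : (∏ l ∈ univ.erase j, (vC j - vC l)) ≠ 0 :=
      prod_ne_zero_iff.2 fun l hl => sub_ne_zero.2 fun h => (mem_erase.1 hl).1 (hvC h).symm
    have h3 := hhC j
    simp only [gg, hh, prod_div_distrib, prod_const, card_erase_of_mem (mem_univ j), card_univ,
      Fintype.card_fin]
    have hpow : c ^ b = c ^ (b - 1) * c := by rw [← pow_succ, Nat.sub_add_cancel hb]
    have hcb1 : (c : ℂ) ^ (b - 1) ≠ 0 := pow_ne_zero _ hc
    rw [show vC j - (x - c) = vC j - x + c from by ring, one_div_div, div_div_eq_mul_div]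
    congr 1
    rw [hpow]
    field_simp [hcb1, h2]
  simp only [hterm]
  rw [hK]
  congr 1
  have hB : ∀ (w : Fin b → ℂ), ∏ l, hh c (w l) x = (∏ l, ((x - c) - w l)) / (-c) ^ b := by
    intro w
    have hw : ∀ l : Fin b, hh c (w l) x = ((x - c) - w l) / (-c) := fun l => by
      rw [hh, div_eq_div_iff hc (neg_ne_zero.2 hc)]; ring
    simp only [hw, prod_div_distrib, prod_const, card_univ, Fintype.card_fin]
  rw [hB vB, hB vC]
  have hDC : (∏ l, ((x - c) - vC l)) ≠ 0 :=
    prod_ne_zero_iff.2 fun l _ h => hhC l (by linear_combination -h)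
  have hnc : ((-c) ^ b : ℂ) ≠ 0 := pow_ne_zero _ (neg_ne_zero.2 hc)
  field_simp
end

section
/- With t(u,v)=c^2/((u-v)(u-v+c)): ∑_{j=1}^a t(u^C_j, x_k) Ω_j = h(ū^B, x_k)/h(ū^C, x_k) - g(x_k, ū^C)/g(x_k, ū^B), where Ω_j = (1/g(u^C_j, ū^B)) ∏_{l≠j} g(u^C_j, u^C_l). -/
open Finset

noncomputable def tt (c u v : ℂ) : ℂ := c ^ 2 / ((u - v) * (u - v + c))

open Polynomial in
lemma lag_key {a : ℕ} (u b : Fin a → ℂ) (hu : Function.Injective u) (z : ℂ)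
    (hz : ∀ j, z - u j ≠ 0) :
    (∏ l, (z - b l)) / (∏ l, (z - u l)) =
      1 + ∑ j, (∏ l, (u j - b l)) / ((z - u j) * ∏ l ∈ univ.erase j, (u j - u l)) := by
  classical
  set P : ℂ[X] := ∏ l, (X - C (b l)) with hP
  set Q : ℂ[X] := ∏ l, (X - C (u l)) with hQ
  have hPm : P.Monic := monic_prod_of_monic _ _ fun i _ => monic_X_sub_C _
  have hQm : Q.Monic := monic_prod_of_monic _ _ fun i _ => monic_X_sub_C _
  have hPd : P.natDegree = a := by
    rw [hP, natDegree_prod_of_monic _ _ fun i _ => monic_X_sub_C _]; simp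
  have hQd : Q.natDegree = a := by
    rw [hQ, natDegree_prod_of_monic _ _ fun i _ => monic_X_sub_C _]; simp
  have hdeg : (P - Q).degree < (#(univ : Finset (Fin a)) : ℕ) := by
    have h1 : P.degree = Q.degree := by
      rw [degree_eq_natDegree hPm.ne_zero, degree_eq_natDegree hQm.ne_zero, hPd, hQd]
    have := degree_sub_lt h1 hPm.ne_zero (by rw [hPm.leadingCoeff, hQm.leadingCoeff])
    calc (P - Q).degree < P.degree := this
      _ = _ := by rw [degree_eq_natDegree hPm.ne_zero, hPd]; simp
  have hinterp := Lagrange.eq_interpolate (f := P - Q) hu.injOn hdeg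
  have hev := congrArg (Polynomial.eval z) hinterp
  simp only [Lagrange.interpolate_apply, Lagrange.basis, Lagrange.basisDivisor,
    eval_finset_sum, eval_mul, eval_C, eval_sub, eval_prod, eval_X, hP, hQ] at hev
  have hD : (∏ l, (z - u l)) ≠ 0 := prod_ne_zero_iff.mpr fun l _ => hz l
  rw [div_eq_iff hD, add_mul, one_mul, add_comm, ← sub_eq_iff_eq_add, hev, sum_mul]
  refine sum_congr rfl fun j _ => ?_
  have hQj : (∏ l, (u j - u l)) = 0 := prod_eq_zero (mem_univ j) (sub_self _)
  have hBj : (∏ l ∈ univ.erase j, (u j - u l)) ≠ 0 :=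
    prod_ne_zero_iff.mpr fun l hl => sub_ne_zero_of_ne (hu.ne (mem_erase.mp hl).1.symm)
  rw [hQj, sub_zero, prod_mul_distrib, prod_inv_distrib,
      ← Finset.mul_prod_erase univ (fun l => z - u l) (mem_univ j)]
  field_simp
  rw [eq_div_iff (hz j)]

theorem sum_t_Omega (c : ℂ) (hc : c ≠ 0) (a : ℕ) (ha : 1 ≤ a) (x : ℂ)
    (uB uC : Fin a → ℂ) (huC : Function.Injective uC)
    (h1 : ∀ j, uC j ≠ x) (h2 : ∀ j, uC j - x + c ≠ 0)
    (h3 : ∀ l, x ≠ uB l) (h4 : ∀ j l, uC j ≠ uB l) :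
    ∑ j, tt c (uC j) x *
        ((1 / ∏ l, gg c (uC j) (uB l)) * ∏ l ∈ univ.erase j, gg c (uC j) (uC l)) =
      (∏ l, hh c (uB l) x) / (∏ l, hh c (uC l) x) -
        (∏ l, gg c x (uC l)) / (∏ l, gg c x (uB l)) := by
  have hx : ∀ j, x - uC j ≠ 0 := fun j => sub_ne_zero_of_ne (Ne.symm (h1 j))
  have hxc : ∀ j, (x - c) - uC j ≠ 0 := fun j h => h2 j (by linear_combination -h)
  have key1 := lag_key uC uB huC x hx
  have key2 := lag_key uC uB huC (x - c) hxc
  have hca : (c:ℂ)^a ≠ 0 := pow_ne_zero _ hc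
  have hpow : (c:ℂ)^(a-1) = c^a / c := by
    rw [eq_div_iff hc, ← pow_succ]; congr 1; omega
  -- termwise identity for the LHS
  have lhs_eq : ∑ j, tt c (uC j) x *
        ((1 / ∏ l, gg c (uC j) (uB l)) * ∏ l ∈ univ.erase j, gg c (uC j) (uC l)) =
      ∑ j, ((∏ l, (uC j - uB l)) / (((x - c) - uC j) * ∏ l ∈ univ.erase j, (uC j - uC l))
          - (∏ l, (uC j - uB l)) / ((x - uC j) * ∏ l ∈ univ.erase j, (uC j - uC l))) := by
    refine sum_congr rfl fun j _ => ?_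
    have hA : (∏ l, (uC j - uB l)) ≠ 0 :=
      prod_ne_zero_iff.mpr fun l _ => sub_ne_zero_of_ne (h4 j l)
    have hB : (∏ l ∈ univ.erase j, (uC j - uC l)) ≠ 0 :=
      prod_ne_zero_iff.mpr fun l hl => sub_ne_zero_of_ne (huC.ne (mem_erase.mp hl).1.symm)
    have hgB : ∏ l, gg c (uC j) (uB l) = c^a / ∏ l, (uC j - uB l) := by
      simp [gg, prod_div_distrib, card_univ]
    have hgC : ∏ l ∈ univ.erase j, gg c (uC j) (uC l)
        = (c^a / c) / ∏ l ∈ univ.erase j, (uC j - uC l) := by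
      rw [← hpow]
      simp [gg, prod_div_distrib, card_erase_of_mem, card_univ]
    rw [hgB, hgC, tt]
    have h5 : uC j - x ≠ 0 := sub_ne_zero_of_ne (h1 j)
    have h6 := h2 j
    have h7 := hx j
    have h8 := hxc j
    field_simp
    ring
  rw [lhs_eq, sum_sub_distrib]
  have s1 : ∑ j, (∏ l, (uC j - uB l)) / ((x - uC j) * ∏ l ∈ univ.erase j, (uC j - uC l))
      = (∏ l, (x - uB l)) / (∏ l, (x - uC l)) - 1 := by
    rw [key1]; ring
  have s2 : ∑ j, (∏ l, (uC j - uB l)) / (((x - c) - uC j) * ∏ l ∈ univ.erase j, (uC j - uC l))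
      = (∏ l, ((x - c) - uB l)) / (∏ l, ((x - c) - uC l)) - 1 := by
    rw [key2]; ring
  rw [s1, s2]
  -- rewrite RHS
  have e1 : (∏ l, hh c (uB l) x) / (∏ l, hh c (uC l) x)
      = (∏ l, ((x - c) - uB l)) / (∏ l, ((x - c) - uC l)) := by
    have hm : ((-1:ℂ))^a ≠ 0 := pow_ne_zero _ (by norm_num)
    have nB : ∏ l, (uB l - x + c) = (-1:ℂ)^a * ∏ l, ((x - c) - uB l) := by
      calc ∏ l, (uB l - x + c) = ∏ l, (-1 * ((x - c) - uB l)) := by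
            exact prod_congr rfl fun l _ => by ring
        _ = _ := by rw [prod_mul_distrib, prod_const, card_univ, Fintype.card_fin]
    have nC : ∏ l, (uC l - x + c) = (-1:ℂ)^a * ∏ l, ((x - c) - uC l) := by
      calc ∏ l, (uC l - x + c) = ∏ l, (-1 * ((x - c) - uC l)) := by
            exact prod_congr rfl fun l _ => by ring
        _ = _ := by rw [prod_mul_distrib, prod_const, card_univ, Fintype.card_fin]
    simp only [hh, prod_div_distrib, prod_const, card_univ, Fintype.card_fin]
    rw [div_div_div_comm, div_self hca, div_one, nB, nC, mul_div_mul_left _ _ hm]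
  have e2 : (∏ l, gg c x (uC l)) / (∏ l, gg c x (uB l))
      = (∏ l, (x - uB l)) / (∏ l, (x - uC l)) := by
    simp only [gg, prod_div_distrib, prod_const, card_univ, Fintype.card_fin]
    rw [div_div_div_comm, div_self hca, one_div, inv_div]
  rw [e1, e2]
  ring
end

section
/- With t(u,v)=c^2/((u-v)(u-v+c)): ∑_{j=1}^a t(x_k, u^C_j) Ω_j = g(x_k, ū^C)/g(x_k, ū^B) - h(x_k, ū^B)/h(x_k, ū^C), where Ω_j = (1/g(u^C_j, ū^B)) ∏_{l≠j} g(u^C_j, u^C_l). -/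
open Finset Polynomial

lemma key (a : ℕ) (v w : Fin a → ℂ) (hv : Function.Injective v) (y : ℂ) :
    (∏ l, (y - w l)) - ∏ l, (y - v l) =
      ∑ j, (∏ l, (v j - w l)) * ∏ l ∈ univ.erase j, ((v j - v l)⁻¹ * (y - v l)) := by
  set p : Polynomial ℂ := (∏ l, (X - C (w l))) - ∏ l, (X - C (v l)) with hp
  have hmw : (∏ l, (X - C (w l)) : ℂ[X]).Monic :=
    monic_prod_of_monic _ _ fun i _ => monic_X_sub_C _
  have hmv : (∏ l, (X - C (v l)) : ℂ[X]).Monic :=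
    monic_prod_of_monic _ _ fun i _ => monic_X_sub_C _
  have hdw : (∏ l, (X - C (w l)) : ℂ[X]).degree = a := by
    rw [degree_prod]; simp
  have hdv : (∏ l, (X - C (v l)) : ℂ[X]).degree = a := by
    rw [degree_prod]; simp
  have hdeg : p.degree < a := by
    have := Polynomial.degree_sub_lt (hdw.trans hdv.symm) hmw.ne_zero
      (hmw.leadingCoeff.trans hmv.leadingCoeff.symm)
    rwa [hdw] at this
  have hinj : Set.InjOn v (univ : Finset (Fin a)) := fun i _ j _ h => hv h
  have hpi : p = Lagrange.interpolate univ v (fun j => p.eval (v j)) := by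
    apply Lagrange.eq_interpolate hinj
    simpa using hdeg
  have heval : ∀ j : Fin a, p.eval (v j) = ∏ l, (v j - w l) := by
    intro j
    have h0 : (∏ l, (X - C (v l)) : ℂ[X]).eval (v j) = 0 := by
      rw [eval_prod]
      exact Finset.prod_eq_zero (mem_univ j) (by simp)
    simp [hp, eval_prod, h0]
  have hE := congrArg (Polynomial.eval y) hpi
  rw [Lagrange.interpolate_apply] at hE
  simp only [hp, eval_sub, eval_prod, eval_finset_sum, eval_mul, eval_C, eval_X] at hE
  rw [hE]
  refine Finset.sum_congr rfl fun j _ => ?_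
  have h0 : ∏ l, (v j - v l) = 0 := Finset.prod_eq_zero (mem_univ j) (by simp)
  rw [h0, sub_zero]
  simp [Lagrange.basis, Lagrange.basisDivisor, eval_prod]

lemma key2 (a : ℕ) (v w : Fin a → ℂ) (hv : Function.Injective v) (y : ℂ)
    (hy : ∀ j, y - v j ≠ 0) :
    (∏ l, (y - w l)) / (∏ l, (y - v l)) =
      1 + ∑ j, (∏ l, (v j - w l)) / ((y - v j) * ∏ l ∈ univ.erase j, (v j - v l)) := by
  have hA : (∏ l, (y - v l)) ≠ 0 := Finset.prod_ne_zero_iff.mpr fun l _ => hy l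
  have hD : ∀ j : Fin a, (∏ l ∈ univ.erase j, (v j - v l)) ≠ 0 := fun j =>
    Finset.prod_ne_zero_iff.mpr fun l hl =>
      sub_ne_zero.mpr fun h => (Finset.mem_erase.mp hl).1.symm (hv h)
  have expand : ∀ j : Fin a,
      (∏ l, (v j - w l)) * ∏ l ∈ univ.erase j, ((v j - v l)⁻¹ * (y - v l)) =
      ((∏ l, (v j - w l)) / ((y - v j) * ∏ l ∈ univ.erase j, (v j - v l))) *
        ∏ l, (y - v l) := by
    intro j
    rw [Finset.prod_mul_distrib, Finset.prod_inv_distrib,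
      ← Finset.mul_prod_erase univ (fun l => y - v l) (mem_univ j)]
    field_simp [hy j, hD j]
  rw [div_eq_iff hA]
  have hk := key a v w hv y
  rw [sub_eq_iff_eq_add] at hk
  rw [hk, add_mul, one_mul, Finset.sum_mul, add_comm]
  congr 1
  exact Finset.sum_congr rfl fun j _ => expand j

theorem sum_t_Omega' (c : ℂ) (hc : c ≠ 0) (a : ℕ) (ha : 1 ≤ a) (x : ℂ)
    (uB uC : Fin a → ℂ) (huC : Function.Injective uC)
    (h1 : ∀ j, x ≠ uC j) (h2 : ∀ j, x - uC j + c ≠ 0)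
    (h3 : ∀ l, x ≠ uB l) (h4 : ∀ j l, uC j ≠ uB l) :
    ∑ j, tt c x (uC j) *
        ((1 / ∏ l, gg c (uC j) (uB l)) * ∏ l ∈ univ.erase j, gg c (uC j) (uC l)) =
      (∏ l, gg c x (uC l)) / (∏ l, gg c x (uB l)) -
        (∏ l, hh c x (uB l)) / (∏ l, hh c x (uC l)) := by
  obtain ⟨m, rfl⟩ : ∃ m, a = m + 1 := ⟨a - 1, (Nat.succ_pred_eq_of_pos ha).symm⟩
  have hK : (c : ℂ) ^ (m + 1) ≠ 0 := pow_ne_zero _ hc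
  have h1' : ∀ j, x - uC j ≠ 0 := fun j => sub_ne_zero.mpr (h1 j)
  have h3' : ∀ l, x - uB l ≠ 0 := fun l => sub_ne_zero.mpr (h3 l)
  have h2' : ∀ j, (x + c) - uC j ≠ 0 := fun j => by
    have := h2 j; intro h; apply this; linear_combination h
  have hD : ∀ j : Fin (m+1), (∏ l ∈ univ.erase j, (uC j - uC l)) ≠ 0 := fun j =>
    Finset.prod_ne_zero_iff.mpr fun l hl =>
      sub_ne_zero.mpr fun h => (Finset.mem_erase.mp hl).1.symm (huC h)
  have hA : (∏ l, (x - uC l)) ≠ 0 := Finset.prod_ne_zero_iff.mpr fun l _ => h1' l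
  have hB : (∏ l, (x - uB l)) ≠ 0 := Finset.prod_ne_zero_iff.mpr fun l _ => h3' l
  have hA' : (∏ l, ((x + c) - uC l)) ≠ 0 := Finset.prod_ne_zero_iff.mpr fun l _ => h2' l
  -- ratio rewrites
  have ratio1 : (∏ l, gg c x (uC l)) / (∏ l, gg c x (uB l)) =
      (∏ l, (x - uB l)) / (∏ l, (x - uC l)) := by
    simp only [gg]
    rw [Finset.prod_div_distrib, Finset.prod_div_distrib, Finset.prod_const, card_univ,
      Fintype.card_fin]
    rw [div_div_div_comm, div_self hK, one_div_div]
  have ratio2 : (∏ l, hh c x (uB l)) / (∏ l, hh c x (uC l)) =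
      (∏ l, ((x + c) - uB l)) / (∏ l, ((x + c) - uC l)) := by
    simp only [hh]
    have e1 : ∀ u : ℂ, x - u + c = (x + c) - u := fun u => by ring
    simp only [e1]
    rw [Finset.prod_div_distrib, Finset.prod_div_distrib, Finset.prod_const, card_univ,
      Fintype.card_fin]
    rw [div_div_div_comm, div_self hK, div_one]
  rw [ratio1, ratio2,
    key2 (m+1) uC uB huC x h1',
    key2 (m+1) uC uB huC (x + c) h2',
    add_sub_add_left_eq_sub, ← Finset.sum_sub_distrib]
  refine Finset.sum_congr rfl fun j _ => ?_
  have hgB : (1 / ∏ l, gg c (uC j) (uB l)) = (∏ l, (uC j - uB l)) / c ^ (m + 1) := by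
    simp only [gg]
    rw [Finset.prod_div_distrib, Finset.prod_const, card_univ, Fintype.card_fin, one_div_div]
  have hgC : (∏ l ∈ univ.erase j, gg c (uC j) (uC l)) =
      c ^ m / (∏ l ∈ univ.erase j, (uC j - uC l)) := by
    simp only [gg]
    rw [Finset.prod_div_distrib, Finset.prod_const, card_erase_of_mem (mem_univ j), card_univ,
      Fintype.card_fin, Nat.add_sub_cancel]
  rw [hgB, hgC, tt]
  field_simp [h1' j, h2 j, h2' j, hD j]
  ring
end

section
/- Laplace expansion over partitions: for n×n matrices A and B with entries A(u_j,v_k), B(u_j,v_k), det(A+B) = ∑ (-1)^{[P_u]+[P_v]} det(A restricted to rows ū_I and columns v̄_I) · det(B restricted to rows ū_II and columns v̄_II), where the sum is over all pairs of subsets ū_I ⊆ {u_1,…,u_n}, v̄_I ⊆ {v_1,…,v_n} with |ū_I| = |v̄_I|, the complements are ū_II, v̄_II, and [P_u]+[P_v] is the parity of the permutation mapping the index sequence of (ū_I, ū_II) to that of (v̄_I, v̄_II). -/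
open Finset

section LaplaceAux

open Equiv

variable {n : ℕ}



private lemma lapOrderEmb_congr (s : Finset (Fin n)) {k1 k2 : ℕ} (h1 : s.card = k1)
    (h2 : s.card = k2) {i : Fin k1} {j : Fin k2} (hij : (i : ℕ) = j) :
    s.orderEmbOfFin h1 i = s.orderEmbOfFin h2 j := by
  subst h1; subst h2; congr 1; exact Fin.ext hij

private lemma lapOrderEmb_congr' {s t : Finset (Fin n)} (hst : s = t) {k : ℕ} (h1 : s.card = k)
    (h2 : t.card = k) (i : Fin k) : s.orderEmbOfFin h1 i = t.orderEmbOfFin h2 i := by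
  subst hst; rfl

private lemma lapSwap_down {a b : Fin n} (hab : (a : ℕ) + 1 = b) {C : Finset (Fin n)}
    (hb : b ∈ C) (ha : a ∉ C) {k : ℕ} (hC : C.card = k)
    (hC' : (insert a (C.erase b)).card = k) (i : Fin k) :
    (insert a (C.erase b)).orderEmbOfFin hC' i = Equiv.swap a b (C.orderEmbOfFin hC i) := by
  have key : (fun i => Equiv.swap a b (C.orderEmbOfFin hC i)) =
      ⇑((insert a (C.erase b)).orderEmbOfFin hC') := by
    apply Finset.orderEmbOfFin_unique
    · intro x
      have hy : C.orderEmbOfFin hC x ∈ C := Finset.orderEmbOfFin_mem C hC x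
      by_cases hyb : C.orderEmbOfFin hC x = b
      · rw [hyb, Equiv.swap_apply_right]; exact mem_insert_self _ _
      · have hya : C.orderEmbOfFin hC x ≠ a := fun h => ha (h ▸ hy)
        rw [Equiv.swap_apply_of_ne_of_ne hya hyb]
        exact mem_insert_of_mem (mem_erase.2 ⟨hyb, hy⟩)
    · intro i j hij
      show Equiv.swap a b (C.orderEmbOfFin hC i) < Equiv.swap a b (C.orderEmbOfFin hC j)
      have h1 : C.orderEmbOfFin hC i < C.orderEmbOfFin hC j :=
        (C.orderEmbOfFin hC).strictMono hij
      set x := C.orderEmbOfFin hC i with hxdef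
      set y := C.orderEmbOfFin hC j with hydef
      have hx : x ∈ C := Finset.orderEmbOfFin_mem C hC i
      have hy : y ∈ C := Finset.orderEmbOfFin_mem C hC j
      have hxa : x ≠ a := fun h => ha (h ▸ hx)
      have hya : y ≠ a := fun h => ha (h ▸ hy)
      by_cases hxb : x = b
      · have hyb : y ≠ b := fun h => absurd (hxb ▸ h ▸ h1) (lt_irrefl _)
        rw [hxb, Equiv.swap_apply_right, Equiv.swap_apply_of_ne_of_ne hya hyb]
        have : (b : ℕ) < y := by rw [← hxb]; exact h1
        exact Fin.lt_def.2 (by omega)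
      · by_cases hyb : y = b
        · rw [hyb, Equiv.swap_apply_right, Equiv.swap_apply_of_ne_of_ne hxa hxb]
          have h2 : (x : ℕ) < b := hyb ▸ h1
          have h3 : (x : ℕ) ≠ a := fun h => hxa (Fin.ext h)
          exact Fin.lt_def.2 (by omega)
        · rw [Equiv.swap_apply_of_ne_of_ne hxa hxb, Equiv.swap_apply_of_ne_of_ne hya hyb]
          exact h1
  exact (congrFun key i).symm

private lemma lapSwap_up {a b : Fin n} (hab : (a : ℕ) + 1 = b) {D : Finset (Fin n)}
    (haD : a ∈ D) (hbD : b ∉ D) {k : ℕ} (hD : D.card = k)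
    (hD' : (insert b (D.erase a)).card = k) (i : Fin k) :
    (insert b (D.erase a)).orderEmbOfFin hD' i = Equiv.swap a b (D.orderEmbOfFin hD i) := by
  have hne : a ≠ b := fun h => by simp [h] at hab
  set D' := insert b (D.erase a) with hD'def
  have hbD' : b ∈ D' := mem_insert_self _ _
  have haD' : a ∉ D' := by
    simp only [hD'def, mem_insert, mem_erase]
    push_neg
    exact ⟨hne, fun h => absurd rfl h⟩
  have hDD : insert a (D'.erase b) = D := by
    have h1 : D'.erase b = D.erase a := by
      rw [hD'def, Finset.erase_insert]
      simp [mem_erase, hbD]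
    rw [h1, Finset.insert_erase haD]
  have hcard : (insert a (D'.erase b)).card = k := by rw [hDD]; exact hD
  have h2 := lapSwap_down hab hbD' haD' hD' hcard i
  calc D'.orderEmbOfFin hD' i
      = Equiv.swap a b (Equiv.swap a b (D'.orderEmbOfFin hD' i)) := (Equiv.swap_apply_self _ _ _).symm
    _ = Equiv.swap a b ((insert a (D'.erase b)).orderEmbOfFin hcard i) := by rw [← h2]
    _ = Equiv.swap a b (D.orderEmbOfFin hD i) := by rw [lapOrderEmb_congr' hDD]

private lemma lapCompl_insert {a b : Fin n} (hne : a ≠ b) {C : Finset (Fin n)}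
    (hb : b ∈ C) (ha : a ∉ C) : (insert a (C.erase b))ᶜ = insert b (Cᶜ.erase a) := by
  ext x
  simp only [mem_compl, mem_insert, mem_erase]
  by_cases hxa : x = a <;> by_cases hxb : x = b <;> simp_all



private lemma lap_card_sum (S : Finset (Fin n)) : S.card + Sᶜ.card = n := by
  rw [S.card_add_card_compl, Fintype.card_fin]

private noncomputable def lapSplit (S : Finset (Fin n)) : Fin S.card ⊕ Fin Sᶜ.card ≃ Fin n :=
  Equiv.ofBijective (Sum.elim (S.orderEmbOfFin rfl) (Sᶜ.orderEmbOfFin rfl)) (by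
    rw [Fintype.bijective_iff_surjective_and_card]
    constructor
    · intro y
      by_cases hy : y ∈ S
      · have : y ∈ Set.range ⇑(S.orderEmbOfFin rfl) := by
          rw [Finset.range_orderEmbOfFin]; exact hy
        obtain ⟨i, hi⟩ := this
        exact ⟨Sum.inl i, hi⟩
      · have : y ∈ Set.range ⇑(Sᶜ.orderEmbOfFin rfl) := by
          rw [Finset.range_orderEmbOfFin]; exact mem_compl.2 hy
        obtain ⟨i, hi⟩ := this
        exact ⟨Sum.inr i, hi⟩
    · simp [lap_card_sum S])

private noncomputable def lapP (S : Finset (Fin n)) : Equiv.Perm (Fin n) :=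
  ((finCongr (lap_card_sum S).symm).trans finSumFinEquiv.symm).trans (lapSplit S)

private lemma lapP_apply_lt (S : Finset (Fin n)) (x : Fin n) (h : (x : ℕ) < S.card) :
    lapP S x = S.orderEmbOfFin rfl ⟨x, h⟩ := by
  show lapSplit S (finSumFinEquiv.symm (finCongr (lap_card_sum S).symm x)) = _
  have hx : (finSumFinEquiv.symm (finCongr (lap_card_sum S).symm x) :
      Fin S.card ⊕ Fin Sᶜ.card) = Sum.inl ⟨x, h⟩ := by
    rw [Equiv.symm_apply_eq, finSumFinEquiv_apply_left]
    apply Fin.ext; simp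
  rw [hx]; rfl

private lemma lapP_apply_ge (S : Finset (Fin n)) (x : Fin n) (h : S.card ≤ (x : ℕ)) :
    lapP S x = Sᶜ.orderEmbOfFin rfl ⟨(x : ℕ) - S.card, by
      have := lap_card_sum S; omega⟩ := by
  show lapSplit S (finSumFinEquiv.symm (finCongr (lap_card_sum S).symm x)) = _
  have hx : (finSumFinEquiv.symm (finCongr (lap_card_sum S).symm x) :
      Fin S.card ⊕ Fin Sᶜ.card) = Sum.inr ⟨(x : ℕ) - S.card, by have := lap_card_sum S; omega⟩ := by
    rw [Equiv.symm_apply_eq, finSumFinEquiv_apply_right]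
    apply Fin.ext; simp [Fin.natAdd]; omega
  rw [hx]; rfl


private lemma lapP_step {a b : Fin n} (hab : (a : ℕ) + 1 = b) {S : Finset (Fin n)}
    (hb : b ∈ S) (ha : a ∉ S) :
    lapP S = Equiv.swap a b * lapP (insert a (S.erase b)) := by
  have hne : a ≠ b := fun h => by simp [h] at hab
  set S' := insert a (S.erase b) with hS'def
  have hanotin : a ∉ S.erase b := fun h => ha (Finset.mem_of_mem_erase h)
  have hcard : S'.card = S.card := by
    rw [hS'def, Finset.card_insert_of_notMem hanotin, Finset.card_erase_of_mem hb]
    have : 0 < S.card := Finset.card_pos.2 ⟨b, hb⟩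
    omega
  have hccard : S'ᶜ.card = Sᶜ.card := by rw [card_compl, card_compl, hcard]
  ext x
  rw [Equiv.Perm.mul_apply]
  by_cases hx : (x : ℕ) < S.card
  · rw [lapP_apply_lt S x hx, lapP_apply_lt S' x (by omega)]
    have h1 := lapSwap_down hab hb ha (rfl : S.card = S.card) hcard ⟨x, hx⟩
    have h2 : S'.orderEmbOfFin rfl ⟨(x : ℕ), by omega⟩ = S'.orderEmbOfFin hcard ⟨x, hx⟩ :=
      lapOrderEmb_congr S' rfl hcard rfl
    rw [h2, h1, Equiv.swap_apply_self]
  · push_neg at hx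
    rw [lapP_apply_ge S x hx, lapP_apply_ge S' x (by omega)]
    have hac : a ∈ Sᶜ := mem_compl.2 ha
    have hbc : b ∉ Sᶜ := fun h => (mem_compl.1 h) hb
    have hcompl : S'ᶜ = insert b (Sᶜ.erase a) := lapCompl_insert hne hb ha
    have hccard2 : (insert b (Sᶜ.erase a)).card = Sᶜ.card := by rw [← hcompl]; exact hccard
    have h1 := lapSwap_up hab hac hbc (rfl : Sᶜ.card = Sᶜ.card) hccard2
      ⟨(x : ℕ) - S.card, by have := lap_card_sum S; omega⟩
    have h2 : S'ᶜ.orderEmbOfFin rfl ⟨(x : ℕ) - S'.card, by have := lap_card_sum S'; omega⟩ =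
        (insert b (Sᶜ.erase a)).orderEmbOfFin hccard2
          ⟨(x : ℕ) - S.card, by have := lap_card_sum S; omega⟩ := by
      refine (lapOrderEmb_congr' hcompl rfl ?_ _).trans (lapOrderEmb_congr _ ?_ hccard2 ?_) <;>
        simp [hcompl, hcard]
    rw [h2, h1, Equiv.swap_apply_self]

private lemma lap_exists_step (S : Finset (Fin n)) (hS : ¬ ∀ x ∈ S, (x : ℕ) < S.card) :
    ∃ a b : Fin n, (a : ℕ) + 1 = (b : ℕ) ∧ b ∈ S ∧ a ∉ S := by
  by_contra hcon
  push_neg at hcon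
  apply hS
  intro x hx
  have hclos : ∀ c : ℕ, c ≤ (x : ℕ) → (⟨(x : ℕ) - c, by have := x.2; omega⟩ : Fin n) ∈ S := by
    intro c
    induction c with
    | zero => intro _; simpa using hx
    | succ c ih =>
      intro hc
      have h1 := ih (by omega)
      have h2 := hcon ⟨(x : ℕ) - (c + 1), by have := x.2; omega⟩
        ⟨(x : ℕ) - c, by have := x.2; omega⟩ (by show (x:ℕ) - (c+1) + 1 = (x:ℕ) - c; omega) h1
      exact h2
  have himg : Finset.range ((x : ℕ) + 1) ⊆ S.image Fin.val := by
    intro m hm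
    rw [Finset.mem_range] at hm
    rw [Finset.mem_image]
    refine ⟨_, hclos ((x : ℕ) - m) (by omega), ?_⟩
    show (x : ℕ) - ((x : ℕ) - m) = m
    omega
  have hcard := Finset.card_le_card himg
  rw [Finset.card_range, Finset.card_image_of_injective _ Fin.val_injective] at hcard
  omega

private lemma lapP_base (S : Finset (Fin n)) (hS : ∀ x ∈ S, (x : ℕ) < S.card) :
    lapP S = 1 ∧ (∑ i ∈ S, (i : ℕ)) = ∑ i ∈ Finset.range S.card, i := by
  have hbound : S.card ≤ n := le_trans (Finset.card_le_univ S) (le_of_eq (by simp))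
  have hSeq : S = (Finset.range S.card).attachFin
      (fun m hm => lt_of_lt_of_le (Finset.mem_range.1 hm) hbound) := by
    apply Finset.eq_of_subset_of_card_le
    · intro x hx
      rw [Finset.mem_attachFin, Finset.mem_range]
      exact hS x hx
    · rw [Finset.card_attachFin, Finset.card_range]
  have hmemS : ∀ (m : ℕ) (hm : m < S.card), (⟨m, lt_of_lt_of_le hm hbound⟩ : Fin n) ∈ S := by
    intro m hm
    have h1 : (⟨m, lt_of_lt_of_le hm hbound⟩ : Fin n) ∈ (Finset.range S.card).attachFin
        (fun m hm => lt_of_lt_of_le (Finset.mem_range.1 hm) hbound) := by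
      rw [Finset.mem_attachFin, Finset.mem_range]
      exact hm
    rwa [← hSeq] at h1
  have hemb : ∀ i : Fin S.card, S.orderEmbOfFin rfl i = ⟨i, lt_of_lt_of_le i.2 hbound⟩ := by
    have := Finset.orderEmbOfFin_unique (rfl : S.card = S.card)
      (f := fun i : Fin S.card => (⟨(i : ℕ), lt_of_lt_of_le i.2 hbound⟩ : Fin n))
      (fun i => hmemS i i.2) (fun i j hij => by exact hij)
    intro i
    exact (congrFun this i).symm
  have hcemb : ∀ j : Fin Sᶜ.card, Sᶜ.orderEmbOfFin rfl j =
      ⟨S.card + (j : ℕ), by have := lap_card_sum S; omega⟩ := by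
    have := Finset.orderEmbOfFin_unique (rfl : Sᶜ.card = Sᶜ.card)
      (f := fun j : Fin Sᶜ.card =>
        (⟨S.card + (j : ℕ), by have := lap_card_sum S; omega⟩ : Fin n))
      (fun j => by
        rw [Finset.mem_compl]
        intro hmem
        have := hS _ hmem
        simp at this)
      (fun i j hij => by
        simp only [Fin.mk_lt_mk, add_lt_add_iff_left]
        exact hij)
    intro j
    exact (congrFun this j).symm
  constructor
  · ext x
    simp only [Equiv.Perm.coe_one, id_eq]
    by_cases hx : (x : ℕ) < S.card
    · rw [lapP_apply_lt S x hx, hemb]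
    · push_neg at hx
      rw [lapP_apply_ge S x hx, hcemb]
      show S.card + ((x : ℕ) - S.card) = (x : ℕ)
      omega
  · have himg : S.image Fin.val = Finset.range S.card := by
      ext m
      rw [Finset.mem_image, Finset.mem_range]
      constructor
      · rintro ⟨x, hx, rfl⟩; exact hS x hx
      · intro hm; exact ⟨⟨m, lt_of_lt_of_le hm hbound⟩, hmemS m hm, rfl⟩
    calc ∑ i ∈ S, (i : ℕ) = ∑ m ∈ S.image Fin.val, m :=
          (Finset.sum_image (f := fun m => m) (g := Fin.val)
            (fun x _ y _ h => Fin.val_injective h)).symm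
      _ = ∑ i ∈ Finset.range S.card, i := by rw [himg]

private lemma lap_signP (S : Finset (Fin n)) :
    Equiv.Perm.sign (lapP S) =
      (-1) ^ ((∑ i ∈ S, (i : ℕ)) + ∑ i ∈ Finset.range S.card, i) := by
  suffices H : ∀ N (S : Finset (Fin n)), (∑ i ∈ S, (i : ℕ)) = N →
      Equiv.Perm.sign (lapP S) =
        (-1) ^ ((∑ i ∈ S, (i : ℕ)) + ∑ i ∈ Finset.range S.card, i) from H _ S rfl
  intro N
  induction N using Nat.strong_induction_on with
  | _ N ih =>
    intro S hSN
    by_cases hS : ∀ x ∈ S, (x : ℕ) < S.card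
    · obtain ⟨h1, h2⟩ := lapP_base S hS
      rw [h1, map_one, h2]
      exact (Even.neg_one_pow ⟨_, rfl⟩).symm
    · obtain ⟨a, b, hab, hb, ha⟩ := lap_exists_step S hS
      have hne : a ≠ b := fun h => by simp [h] at hab
      set S' := insert a (S.erase b) with hS'def
      have hanotin : a ∉ S.erase b := fun h => ha (Finset.mem_of_mem_erase h)
      have hcard : S'.card = S.card := by
        rw [hS'def, Finset.card_insert_of_notMem hanotin, Finset.card_erase_of_mem hb]
        have : 0 < S.card := Finset.card_pos.2 ⟨b, hb⟩
        omega
      have hsum : (∑ i ∈ S, (i : ℕ)) = (∑ i ∈ S', (i : ℕ)) + 1 := by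
        rw [← Finset.add_sum_erase S _ hb, hS'def, Finset.sum_insert hanotin]
        omega
      have hbpos : 0 < (b : ℕ) := by omega
      have hlt : (∑ i ∈ S', (i : ℕ)) < N := by omega
      rw [lapP_step hab hb ha, map_mul, Equiv.Perm.sign_swap hne,
        ih _ hlt S' rfl, hcard]
      rw [show (∑ i ∈ S, (i : ℕ)) + ∑ i ∈ Finset.range S.card, i =
        ((∑ i ∈ S', (i : ℕ)) + ∑ i ∈ Finset.range S.card, i) + 1 from by omega, pow_succ]
      rw [mul_comm]


private lemma lap_det_apply {R : Type*} [CommRing R] (M : Matrix (Fin n) (Fin n) R) :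
    M.det = ∑ σ : Equiv.Perm (Fin n),
      ((Equiv.Perm.sign σ : ℤ) : R) * ∏ i, M i (σ i) := by
  rw [← Matrix.det_transpose M, Matrix.det_apply']
  rfl

private noncomputable def lapE (S : Finset (Fin n)) : Fin S.card ⊕ Fin Sᶜ.card ≃ Fin n :=
  finSumFinEquiv.trans (finCongr (lap_card_sum S))

private lemma lapE_inl_val (S : Finset (Fin n)) (i : Fin S.card) :
    ((lapE S (Sum.inl i) : Fin n) : ℕ) = (i : ℕ) := by simp [lapE]

private lemma lapE_inr_val (S : Finset (Fin n)) (j : Fin Sᶜ.card) :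
    ((lapE S (Sum.inr j) : Fin n) : ℕ) = S.card + (j : ℕ) := by simp [lapE, Fin.natAdd]

private lemma lapP_lapE_inl (S : Finset (Fin n)) (i : Fin S.card) :
    lapP S (lapE S (Sum.inl i)) = S.orderEmbOfFin rfl i := by
  rw [lapP_apply_lt S _ (by rw [lapE_inl_val]; exact i.2)]
  exact lapOrderEmb_congr S rfl rfl (lapE_inl_val S i)

private lemma lapP_lapE_inr (S : Finset (Fin n)) (j : Fin Sᶜ.card) :
    lapP S (lapE S (Sum.inr j)) = Sᶜ.orderEmbOfFin rfl j := by
  rw [lapP_apply_ge S _ (by rw [lapE_inr_val]; omega)]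
  refine lapOrderEmb_congr Sᶜ rfl rfl ?_
  show ((lapE S (Sum.inr j) : Fin n) : ℕ) - S.card = (j : ℕ)
  rw [lapE_inr_val]; omega

private noncomputable def lapBlk (S : Finset (Fin n)) (p : Equiv.Perm (Fin S.card))
    (q : Equiv.Perm (Fin Sᶜ.card)) : Equiv.Perm (Fin n) :=
  ((lapE S).symm.trans (p.sumCongr q)).trans (lapE S)

private lemma lapBlk_sign (S : Finset (Fin n)) (p : Equiv.Perm (Fin S.card))
    (q : Equiv.Perm (Fin Sᶜ.card)) :
    Equiv.Perm.sign (lapBlk S p q) = Equiv.Perm.sign p * Equiv.Perm.sign q := by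
  rw [lapBlk, Equiv.Perm.sign_symm_trans_trans, Equiv.Perm.sign_sumCongr]

private lemma lapBlk_inl (S : Finset (Fin n)) (p : Equiv.Perm (Fin S.card))
    (q : Equiv.Perm (Fin Sᶜ.card)) (i : Fin S.card) :
    lapBlk S p q (lapE S (Sum.inl i)) = lapE S (Sum.inl (p i)) := by
  simp [lapBlk, Equiv.Perm.sumCongr_apply]

private lemma lapBlk_inr (S : Finset (Fin n)) (p : Equiv.Perm (Fin S.card))
    (q : Equiv.Perm (Fin Sᶜ.card)) (j : Fin Sᶜ.card) :
    lapBlk S p q (lapE S (Sum.inr j)) = lapE S (Sum.inr (q j)) := by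
  simp [lapBlk, Equiv.Perm.sumCongr_apply]

private noncomputable def lapF (S T : Finset (Fin n))
    (pq : Equiv.Perm (Fin S.card) × Equiv.Perm (Fin Sᶜ.card)) : Equiv.Perm (Fin n) :=
  lapP T * lapBlk S pq.1 pq.2 * (lapP S)⁻¹

private lemma lapF_emb {S T : Finset (Fin n)} (hST : S.card = T.card)
    (pq : Equiv.Perm (Fin S.card) × Equiv.Perm (Fin Sᶜ.card)) (i : Fin S.card) :
    lapF S T pq (S.orderEmbOfFin rfl i) = T.orderEmbOfFin hST.symm (pq.1 i) := by
  rw [lapF, Equiv.Perm.mul_apply, Equiv.Perm.mul_apply]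
  have h1 : (lapP S)⁻¹ (S.orderEmbOfFin rfl i) = lapE S (Sum.inl i) := by
    rw [Equiv.Perm.inv_eq_iff_eq]
    exact (lapP_lapE_inl S i).symm
  rw [h1, lapBlk_inl]
  rw [lapP_apply_lt T _ (by rw [lapE_inl_val]; rw [← hST]; exact (pq.1 i).2)]
  exact lapOrderEmb_congr T rfl hST.symm (lapE_inl_val S (pq.1 i))

private lemma lapF_cemb {S T : Finset (Fin n)} (hST : S.card = T.card)
    (hTSc : Tᶜ.card = Sᶜ.card)
    (pq : Equiv.Perm (Fin S.card) × Equiv.Perm (Fin Sᶜ.card)) (j : Fin Sᶜ.card) :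
    lapF S T pq (Sᶜ.orderEmbOfFin rfl j) = Tᶜ.orderEmbOfFin hTSc (pq.2 j) := by
  rw [lapF, Equiv.Perm.mul_apply, Equiv.Perm.mul_apply]
  have h1 : (lapP S)⁻¹ (Sᶜ.orderEmbOfFin rfl j) = lapE S (Sum.inr j) := by
    rw [Equiv.Perm.inv_eq_iff_eq]
    exact (lapP_lapE_inr S j).symm
  rw [h1, lapBlk_inr]
  rw [lapP_apply_ge T _ (by rw [lapE_inr_val]; omega)]
  refine lapOrderEmb_congr Tᶜ rfl hTSc ?_
  show ((lapE S (Sum.inr (pq.2 j)) : Fin n) : ℕ) - T.card = ((pq.2 j) : ℕ)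
  rw [lapE_inr_val]; omega

private lemma lapF_image {S T : Finset (Fin n)} (hST : S.card = T.card)
    (pq : Equiv.Perm (Fin S.card) × Equiv.Perm (Fin Sᶜ.card)) :
    S.image (lapF S T pq) = T := by
  apply Finset.eq_of_subset_of_card_le
  · intro y hy
    rw [Finset.mem_image] at hy
    obtain ⟨x, hx, rfl⟩ := hy
    have : x ∈ Set.range ⇑(S.orderEmbOfFin rfl) := by
      rw [Finset.range_orderEmbOfFin]; exact hx
    obtain ⟨i, rfl⟩ := this
    rw [lapF_emb hST]
    exact Finset.orderEmbOfFin_mem _ _ _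
  · rw [Finset.card_image_of_injective _ (Equiv.injective _), ← hST]

private lemma lap_maps_compl {S T : Finset (Fin n)} {σ : Equiv.Perm (Fin n)}
    (himg : S.image σ = T) : ∀ x ∈ Sᶜ, σ x ∈ Tᶜ := by
  intro x hx
  rw [Finset.mem_compl] at hx ⊢
  intro hT
  rw [← himg, Finset.mem_image] at hT
  obtain ⟨y, hy, hxy⟩ := hT
  exact hx ((Equiv.injective σ hxy) ▸ hy)

private noncomputable def lapG {S T : Finset (Fin n)} (hST : S.card = T.card)
    (hTSc : Tᶜ.card = Sᶜ.card) (σ : Equiv.Perm (Fin n)) (himg : S.image σ = T) :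
    Equiv.Perm (Fin S.card) × Equiv.Perm (Fin Sᶜ.card) :=
  (Equiv.ofBijective (fun i => (T.orderIsoOfFin hST.symm).symm
      ⟨σ (S.orderEmbOfFin rfl i), himg ▸ Finset.mem_image_of_mem σ
        (Finset.orderEmbOfFin_mem S rfl i)⟩)
    (Finite.injective_iff_bijective.1 (by
      intro i1 i2 h
      apply_fun (T.orderIsoOfFin hST.symm) at h
      simp only [OrderIso.apply_symm_apply] at h
      rw [Subtype.ext_iff] at h
      exact (S.orderEmbOfFin rfl).injective (Equiv.injective σ h))),
   Equiv.ofBijective (fun j => (Tᶜ.orderIsoOfFin hTSc).symm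
      ⟨σ (Sᶜ.orderEmbOfFin rfl j), lap_maps_compl himg _
        (Finset.orderEmbOfFin_mem Sᶜ rfl j)⟩)
    (Finite.injective_iff_bijective.1 (by
      intro j1 j2 h
      apply_fun (Tᶜ.orderIsoOfFin hTSc) at h
      simp only [OrderIso.apply_symm_apply] at h
      rw [Subtype.ext_iff] at h
      exact (Sᶜ.orderEmbOfFin rfl).injective (Equiv.injective σ h))))

private lemma lapG_lapF {S T : Finset (Fin n)} (hST : S.card = T.card)
    (hTSc : Tᶜ.card = Sᶜ.card)
    (pq : Equiv.Perm (Fin S.card) × Equiv.Perm (Fin Sᶜ.card)) :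
    lapG hST hTSc (lapF S T pq) (lapF_image hST pq) = pq := by
  apply Prod.ext
  · apply Equiv.ext; intro i
    show ((T.orderIsoOfFin hST.symm).symm ⟨lapF S T pq (S.orderEmbOfFin rfl i), _⟩ : Fin S.card)
      = (pq.1 i : Fin S.card)
    rw [OrderIso.symm_apply_eq]
    apply Subtype.ext
    show lapF S T pq (S.orderEmbOfFin rfl i) = ((T.orderIsoOfFin hST.symm) (pq.1 i) : Fin n)
    rw [Finset.coe_orderIsoOfFin_apply, lapF_emb hST]
  · apply Equiv.ext; intro j
    show ((Tᶜ.orderIsoOfFin hTSc).symm ⟨lapF S T pq (Sᶜ.orderEmbOfFin rfl j), _⟩ : Fin Sᶜ.card)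
      = (pq.2 j : Fin Sᶜ.card)
    rw [OrderIso.symm_apply_eq]
    apply Subtype.ext
    show lapF S T pq (Sᶜ.orderEmbOfFin rfl j) = ((Tᶜ.orderIsoOfFin hTSc) (pq.2 j) : Fin n)
    rw [Finset.coe_orderIsoOfFin_apply, lapF_cemb hST hTSc]

private lemma lapF_lapG {S T : Finset (Fin n)} (hST : S.card = T.card)
    (hTSc : Tᶜ.card = Sᶜ.card) (σ : Equiv.Perm (Fin n)) (himg : S.image σ = T) :
    lapF S T (lapG hST hTSc σ himg) = σ := by
  apply Equiv.ext; intro x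
  by_cases hx : x ∈ S
  · have : x ∈ Set.range ⇑(S.orderEmbOfFin rfl) := by
      rw [Finset.range_orderEmbOfFin]; exact hx
    obtain ⟨i, rfl⟩ := this
    rw [lapF_emb hST]
    show T.orderEmbOfFin hST.symm ((T.orderIsoOfFin hST.symm).symm ⟨σ (S.orderEmbOfFin rfl i), _⟩)
      = σ (S.orderEmbOfFin rfl i)
    rw [← Finset.coe_orderIsoOfFin_apply, OrderIso.apply_symm_apply]
  · have hxc : x ∈ Sᶜ := Finset.mem_compl.2 hx
    have : x ∈ Set.range ⇑(Sᶜ.orderEmbOfFin rfl) := by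
      rw [Finset.range_orderEmbOfFin]; exact hxc
    obtain ⟨j, rfl⟩ := this
    rw [lapF_cemb hST hTSc]
    show Tᶜ.orderEmbOfFin hTSc ((Tᶜ.orderIsoOfFin hTSc).symm ⟨σ (Sᶜ.orderEmbOfFin rfl j), _⟩)
      = σ (Sᶜ.orderEmbOfFin rfl j)
    rw [← Finset.coe_orderIsoOfFin_apply, OrderIso.apply_symm_apply]


private lemma lap_term {R : Type*} [CommRing R] (A B : Matrix (Fin n) (Fin n) R)
    (S T : Finset (Fin n)) (hST : S.card = T.card) (hTSc : Tᶜ.card = Sᶜ.card)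
    (pq : Equiv.Perm (Fin S.card) × Equiv.Perm (Fin Sᶜ.card)) :
    ((Equiv.Perm.sign (lapF S T pq) : ℤ) : R) *
      ∏ i, (if i ∈ S then A i (lapF S T pq i) else B i (lapF S T pq i)) =
    (-1 : R) ^ ((∑ i ∈ S, (i : ℕ)) + ∑ j ∈ T, (j : ℕ)) *
      (((Equiv.Perm.sign pq.1 : ℤ) : R) *
        ∏ i, A (S.orderEmbOfFin rfl i) (T.orderEmbOfFin hST.symm (pq.1 i))) *
      (((Equiv.Perm.sign pq.2 : ℤ) : R) *
        ∏ j, B (Sᶜ.orderEmbOfFin rfl j) (Tᶜ.orderEmbOfFin hTSc (pq.2 j))) := by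
  have hsign : Equiv.Perm.sign (lapF S T pq) =
      (-1) ^ ((∑ i ∈ T, (i : ℕ)) + ∑ i ∈ Finset.range S.card, i) *
        (Equiv.Perm.sign pq.1 * Equiv.Perm.sign pq.2) *
        (-1) ^ ((∑ i ∈ S, (i : ℕ)) + ∑ i ∈ Finset.range S.card, i) := by
    have hr : (∑ i ∈ Finset.range T.card, i) = ∑ i ∈ Finset.range S.card, i := by rw [hST]
    rw [lapF, map_mul, map_mul, Equiv.Perm.sign_inv, lapBlk_sign, lap_signP, lap_signP, hr]
  have hprod : (∏ i, (if i ∈ S then A i (lapF S T pq i) else B i (lapF S T pq i))) =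
      (∏ i, A (S.orderEmbOfFin rfl i) (T.orderEmbOfFin hST.symm (pq.1 i))) *
        ∏ j, B (Sᶜ.orderEmbOfFin rfl j) (Tᶜ.orderEmbOfFin hTSc (pq.2 j)) := by
    rw [← Equiv.prod_comp ((lapE S).trans (lapP S))
      (fun x => if x ∈ S then A x (lapF S T pq x) else B x (lapF S T pq x))]
    rw [Fintype.prod_sum_type]
    congr 1
    · refine Finset.prod_congr rfl (fun i _ => ?_)
      have he : ((lapE S).trans (lapP S)) (Sum.inl i) = S.orderEmbOfFin rfl i :=
        lapP_lapE_inl S i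
      rw [he, if_pos (Finset.orderEmbOfFin_mem S rfl i), lapF_emb hST]
    · refine Finset.prod_congr rfl (fun j _ => ?_)
      have he : ((lapE S).trans (lapP S)) (Sum.inr j) = Sᶜ.orderEmbOfFin rfl j :=
        lapP_lapE_inr S j
      have hnot : Sᶜ.orderEmbOfFin rfl j ∉ S :=
        Finset.mem_compl.1 (Finset.orderEmbOfFin_mem Sᶜ rfl j)
      rw [he, if_neg hnot, lapF_cemb hST hTSc]
  rw [hsign, hprod]
  have hc : ((((-1 : ℤˣ) ^ ((∑ i ∈ T, (i : ℕ)) + ∑ i ∈ Finset.range S.card, i) *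
      (Equiv.Perm.sign pq.1 * Equiv.Perm.sign pq.2) *
      (-1 : ℤˣ) ^ ((∑ i ∈ S, (i : ℕ)) + ∑ i ∈ Finset.range S.card, i) : ℤˣ) : ℤ) : R) =
      (-1 : R) ^ ((∑ i ∈ S, (i : ℕ)) + ∑ j ∈ T, (j : ℕ)) *
        ((Equiv.Perm.sign pq.1 : ℤ) : R) * ((Equiv.Perm.sign pq.2 : ℤ) : R) := by
    push_cast
    rw [mul_comm ((-1 : R) ^ ((∑ i ∈ T, (i : ℕ)) + ∑ i ∈ Finset.range S.card, i)) _,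
      mul_assoc, ← pow_add]
    rw [show ((∑ i ∈ T, (i : ℕ)) + ∑ i ∈ Finset.range S.card, i) +
        ((∑ i ∈ S, (i : ℕ)) + ∑ i ∈ Finset.range S.card, i) =
        ((∑ i ∈ S, (i : ℕ)) + ∑ j ∈ T, (j : ℕ)) + 2 * ∑ i ∈ Finset.range S.card, i from by ring]
    rw [pow_add, pow_mul, neg_one_sq, one_pow, mul_one]
    ring
  rw [hc]
  ring

private lemma lap_block_sum {R : Type*} [CommRing R] (A B : Matrix (Fin n) (Fin n) R)
    (S T : Finset (Fin n)) (hST : S.card = T.card) (hTSc : Tᶜ.card = Sᶜ.card) :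
    (∑ σ ∈ Finset.univ.filter (fun σ : Equiv.Perm (Fin n) => S.image ⇑σ = T),
        ((Equiv.Perm.sign σ : ℤ) : R) * ∏ i, (if i ∈ S then A i (σ i) else B i (σ i))) =
      (-1 : R) ^ ((∑ i ∈ S, (i : ℕ)) + ∑ j ∈ T, (j : ℕ)) *
        Matrix.det (Matrix.of fun i j : Fin S.card =>
          A (S.orderEmbOfFin rfl i) (T.orderEmbOfFin hST.symm j)) *
        Matrix.det (Matrix.of fun i j : Fin Sᶜ.card =>
          B (Sᶜ.orderEmbOfFin rfl i) (Tᶜ.orderEmbOfFin hTSc j)) := by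
  have hstep : (∑ σ ∈ Finset.univ.filter (fun σ : Equiv.Perm (Fin n) => S.image ⇑σ = T),
      ((Equiv.Perm.sign σ : ℤ) : R) * ∏ i, (if i ∈ S then A i (σ i) else B i (σ i))) =
      ∑ pq ∈ (Finset.univ ×ˢ Finset.univ :
          Finset (Equiv.Perm (Fin S.card) × Equiv.Perm (Fin Sᶜ.card))),
        ((-1 : R) ^ ((∑ i ∈ S, (i : ℕ)) + ∑ j ∈ T, (j : ℕ)) *
          (((Equiv.Perm.sign pq.1 : ℤ) : R) *
            ∏ i, A (S.orderEmbOfFin rfl i) (T.orderEmbOfFin hST.symm (pq.1 i))) *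
          (((Equiv.Perm.sign pq.2 : ℤ) : R) *
            ∏ j, B (Sᶜ.orderEmbOfFin rfl j) (Tᶜ.orderEmbOfFin hTSc (pq.2 j)))) := by
    refine Finset.sum_bij' (fun σ hσ => lapG hST hTSc σ (Finset.mem_filter.1 hσ).2)
      (fun pq _ => lapF S T pq) ?_ ?_ ?_ ?_ ?_
    · intro σ hσ
      simp [Finset.mem_product]
    · intro pq _
      rw [Finset.mem_filter]
      exact ⟨Finset.mem_univ _, lapF_image hST pq⟩
    · intro σ hσ
      exact lapF_lapG hST hTSc σ (Finset.mem_filter.1 hσ).2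
    · intro pq _
      exact lapG_lapF hST hTSc pq
    · intro σ hσ
      conv_lhs => rw [← lapF_lapG hST hTSc σ (Finset.mem_filter.1 hσ).2]
      exact lap_term A B S T hST hTSc _
  rw [hstep, Finset.sum_product, lap_det_apply, lap_det_apply, Finset.mul_sum]
  rw [Finset.sum_comm]
  refine Finset.sum_congr rfl (fun q _ => ?_)
  rw [Finset.mul_sum, Finset.sum_mul]
  refine Finset.sum_congr rfl (fun p _ => ?_)
  simp only [Matrix.of_apply]
  try ring


end LaplaceAux

theorem laplace_expansion (n : ℕ) (hn : 1 ≤ n) (R : Type*) [CommRing R]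
    (A B : Matrix (Fin n) (Fin n) R) :
    (A + B).det =
      ∑ S : Finset (Fin n), ∑ T : Finset (Fin n),
        if h : S.card = T.card then
          (-1 : R) ^ ((∑ i ∈ S, (i : ℕ)) + ∑ j ∈ T, (j : ℕ)) *
          Matrix.det (Matrix.of fun (i j : Fin S.card) =>
            A (S.orderEmbOfFin rfl i) (T.orderEmbOfFin h.symm j)) *
          Matrix.det (Matrix.of fun (i j : Fin Sᶜ.card) =>
            B (Sᶜ.orderEmbOfFin rfl i)
              (Tᶜ.orderEmbOfFin (by rw [Finset.card_compl, Finset.card_compl, h]) j))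
        else 0 := by
  have h0 : (A + B).det = ∑ S : Finset (Fin n),
      Matrix.detRowAlternating (R := R) (S.piecewise A B) := by
    have := (Matrix.detRowAlternating (n := Fin n) (R := R)).toMultilinearMap.map_add_univ A B
    exact this
  rw [h0]
  refine Finset.sum_congr rfl (fun S _ => ?_)
  have hdet : Matrix.detRowAlternating (R := R) (S.piecewise A B) = ∑ σ : Equiv.Perm (Fin n),
      ((Equiv.Perm.sign σ : ℤ) : R) * ∏ i, (if i ∈ S then A i (σ i) else B i (σ i)) := by
    rw [show Matrix.detRowAlternating (R := R) (S.piecewise A B)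
        = Matrix.det (Matrix.of (S.piecewise A B)) from rfl, lap_det_apply]
    refine Finset.sum_congr rfl (fun σ _ => ?_)
    congr 1
    refine Finset.prod_congr rfl (fun i _ => ?_)
    simp only [Matrix.of_apply]
    by_cases h : i ∈ S
    · rw [if_pos h]; exact congrFun (Finset.piecewise_eq_of_mem _ _ _ h) (σ i)
    · rw [if_neg h]; exact congrFun (Finset.piecewise_eq_of_notMem _ _ _ h) (σ i)
  rw [hdet, ← Finset.sum_fiberwise Finset.univ (fun σ : Equiv.Perm (Fin n) => S.image ⇑σ)
    (fun σ => ((Equiv.Perm.sign σ : ℤ) : R) * ∏ i, (if i ∈ S then A i (σ i) else B i (σ i)))]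
  refine Finset.sum_congr rfl (fun T _ => ?_)
  by_cases hST : S.card = T.card
  · rw [dif_pos hST]
    have hTSc : Tᶜ.card = Sᶜ.card := by rw [Finset.card_compl, Finset.card_compl, hST]
    exact lap_block_sum A B S T hST hTSc
  · rw [dif_neg hST]
    have hempty : Finset.univ.filter (fun σ : Equiv.Perm (Fin n) => S.image ⇑σ = T) = ∅ := by
      rw [Finset.filter_eq_empty_iff]
      intro σ _
      intro h
      exact hST (by rw [← h, Finset.card_image_of_injective _ (Equiv.injective σ)])
    rw [hempty, Finset.sum_empty]
end

section
/- Lemma (sum over partitions of products of g): for sets of complex variables ū (size m1), v̄ (size m2), w̄ (size m1+m2), ∑ g(w̄_I, ū) g(w̄_II, v̄) g(w̄_II, w̄_I) = g(w̄, ū) g(w̄, v̄) / g(ū, v̄), where the sum is over all partitions of w̄ into subsets w̄_I of size m1 and w̄_II of size m2, g(u,v)=c/(u-v), and g applied to sets means the double product over all pairs. -/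
open Finset

open Polynomial in

lemma core (m1 : ℕ) (u : Fin m1 → ℂ) :
    ∀ (m2 : ℕ) (v : Fin m2 → ℂ) (W : Finset ℂ), W.card = m1 + m2 →
    ∑ S ∈ W.powersetCard m1,
      (∏ x ∈ S, ∏ k, (x - v k)) *
      ((∏ x ∈ W \ S, ∏ j, (x - u j)) * (∏ x ∈ W \ S, ∏ y ∈ S, (x - y)⁻¹)) =
    ∏ j, ∏ k, (u j - v k) := by
  intro m2
  induction m2 with
  | zero =>
    intro v W hW
    rw [Nat.add_zero] at hW
    rw [show powersetCard m1 W = {W} from hW ▸ powersetCard_self W]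
    simp
  | succ m2 ih =>
    intro v W hW
    set v' : Fin m2 → ℂ := fun k => v k.castSucc with hv'
    set P : ℂ[X] := ∑ S ∈ W.powersetCard m1,
        (∏ x ∈ S, ((C x - X) * C (∏ k, (x - v' k)))) *
        C ((∏ x ∈ W \ S, ∏ j, (x - u j)) * (∏ x ∈ W \ S, ∏ y ∈ S, (x - y)⁻¹)) with hP
    set e : ℂ := ∏ j, ∏ k, (u j - v' k) with he
    set Q : ℂ[X] := C e * ∏ j, (C (u j) - X) with hQ
    have hPeval : ∀ t, P.eval t = ∑ S ∈ W.powersetCard m1,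
        (∏ x ∈ S, ((x - t) * ∏ k, (x - v' k))) *
        ((∏ x ∈ W \ S, ∏ j, (x - u j)) * (∏ x ∈ W \ S, ∏ y ∈ S, (x - y)⁻¹)) := by
      intro t
      simp [hP, eval_finset_sum, eval_prod]
    have hQeval : ∀ t, Q.eval t = e * ∏ j, (u j - t) := by
      intro t; simp [hQ, eval_prod]
    have hfac : ∀ (x b : ℂ), ((C x - X) * C b : ℂ[X]).natDegree ≤ 1 := by
      intro x b
      refine le_trans (natDegree_mul_le) ?_
      have h1 : (C x - X : ℂ[X]) = -(X - C x) := by ring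
      rw [h1, natDegree_neg, natDegree_X_sub_C, natDegree_C]
    have hdegP : P.natDegree ≤ m1 := by
      rw [hP]
      apply natDegree_sum_le_of_forall_le
      intro S hS
      rw [mem_powersetCard] at hS
      refine le_trans (natDegree_mul_le) ?_
      rw [natDegree_C, Nat.add_zero]
      refine le_trans (natDegree_prod_le _ _) ?_
      calc ∑ x ∈ S, ((C x - X) * C (∏ k, (x - v' k)) : ℂ[X]).natDegree
          ≤ ∑ x ∈ S, 1 := Finset.sum_le_sum (fun x _ => hfac x _)
        _ = S.card := by simp
        _ = m1 := hS.2
    have hdegQ : Q.natDegree ≤ m1 := by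
      rw [hQ]
      refine le_trans (natDegree_mul_le) ?_
      rw [natDegree_C, Nat.zero_add]
      refine le_trans (natDegree_prod_le _ _) ?_
      calc ∑ j, (C (u j) - X : ℂ[X]).natDegree
          ≤ ∑ _j : Fin m1, 1 := Finset.sum_le_sum (fun j _ => by
              have h1 : (C (u j) - X : ℂ[X]) = -(X - C (u j)) := by ring
              rw [h1, natDegree_neg, natDegree_X_sub_C])
        _ = m1 := by simp
    have key : ∀ p ∈ W, P.eval p = Q.eval p := by
      intro p hp
      have hWe : (W.erase p).card = m1 + m2 := by
        rw [card_erase_of_mem hp, hW]; omega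
      have ihp := ih v' (W.erase p) hWe
      rw [hPeval, hQeval]
      rw [← Finset.sum_subset (powersetCard_mono (erase_subset p W))
        (by
          intro S hS hS'
          rw [mem_powersetCard] at hS
          have hpS : p ∈ S := by
            by_contra hpS
            exact hS' (mem_powersetCard.2 ⟨subset_erase.2 ⟨hS.1, hpS⟩, hS.2⟩)
          apply mul_eq_zero_of_left
          exact Finset.prod_eq_zero hpS (by simp))]
      have hstep : ∀ S ∈ (W.erase p).powersetCard m1,
          (∏ x ∈ S, ((x - p) * ∏ k, (x - v' k))) *
          ((∏ x ∈ W \ S, ∏ j, (x - u j)) * (∏ x ∈ W \ S, ∏ y ∈ S, (x - y)⁻¹)) =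
          ((-1 : ℂ) ^ m1 * ∏ j, (p - u j)) *
          ((∏ x ∈ S, ∏ k, (x - v' k)) *
           ((∏ x ∈ (W.erase p) \ S, ∏ j, (x - u j)) *
            (∏ x ∈ (W.erase p) \ S, ∏ y ∈ S, (x - y)⁻¹))) := by
        intro S hS
        rw [mem_powersetCard] at hS
        obtain ⟨hSsub, hScard⟩ := hS
        have hpS : p ∉ S := (subset_erase.1 hSsub).2
        have hSW : S ⊆ W := hSsub.trans (erase_subset p W)
        have hpWS : p ∈ W \ S := mem_sdiff.2 ⟨hp, hpS⟩
        have hsd : (W \ S).erase p = (W.erase p) \ S := by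
          ext x; simp only [mem_erase, mem_sdiff]; tauto
        rw [← Finset.mul_prod_erase (W \ S) (fun x => ∏ j, (x - u j)) hpWS,
            ← Finset.mul_prod_erase (W \ S) (fun x => ∏ y ∈ S, (x - y)⁻¹) hpWS,
            hsd, Finset.prod_mul_distrib]
        have hkey : (∏ x ∈ S, (x - p)) * (∏ y ∈ S, (p - y)⁻¹) = (-1 : ℂ) ^ m1 := by
          rw [← Finset.prod_mul_distrib]
          have : ∀ x ∈ S, (x - p) * (p - x)⁻¹ = (-1 : ℂ) := by
            intro x hx
            have hxp : x ≠ p := fun h => hpS (h ▸ hx)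
            have h0 : p - x ≠ 0 := sub_ne_zero.2 (Ne.symm hxp)
            rw [show x - p = -(p - x) by ring, neg_mul, mul_inv_cancel₀ h0]
          rw [Finset.prod_congr rfl this, Finset.prod_const, hScard]
        calc (∏ x ∈ S, (x - p)) * (∏ x ∈ S, ∏ k, (x - v' k)) *
              ((∏ j, (p - u j)) * (∏ x ∈ (W.erase p) \ S, ∏ j, (x - u j)) *
               ((∏ y ∈ S, (p - y)⁻¹) * (∏ x ∈ (W.erase p) \ S, ∏ y ∈ S, (x - y)⁻¹)))
            = ((∏ x ∈ S, (x - p)) * (∏ y ∈ S, (p - y)⁻¹)) *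
              ((∏ j, (p - u j)) * ((∏ x ∈ S, ∏ k, (x - v' k)) *
               ((∏ x ∈ (W.erase p) \ S, ∏ j, (x - u j)) *
                (∏ x ∈ (W.erase p) \ S, ∏ y ∈ S, (x - y)⁻¹)))) := by ring
          _ = _ := by rw [hkey]; ring
      rw [Finset.sum_congr rfl hstep, ← Finset.mul_sum, ihp]
      have hup : ∏ j, (u j - p) = (-1 : ℂ) ^ m1 * ∏ j, (p - u j) := by
        rw [show (fun j => u j - p) = (fun j => (-1) * (p - u j)) from funext (fun j => by ring)]
        rw [Finset.prod_mul_distrib, Finset.prod_const, card_univ, Fintype.card_fin]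
      rw [hup]; ring
    have hPQ : P = Q := by
      by_contra hne
      have hD : P - Q ≠ 0 := sub_ne_zero.2 hne
      have hsub : W ⊆ (P - Q).roots.toFinset := by
        intro p hp
        rw [Multiset.mem_toFinset, mem_roots hD]
        simp [IsRoot, key p hp]
      have h1 : W.card ≤ (P - Q).roots.toFinset.card := card_le_card hsub
      have h2 := Multiset.toFinset_card_le (P - Q).roots
      have h3 := card_roots' (P - Q)
      have h4 : (P - Q).natDegree ≤ m1 :=
        le_trans (natDegree_sub_le _ _) (max_le hdegP hdegQ)
      omega
    have hL : ∀ x : ℂ, ∏ k : Fin (m2 + 1), (x - v k)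
        = (x - v (Fin.last m2)) * ∏ k : Fin m2, (x - v' k) := by
      intro x; rw [Fin.prod_univ_castSucc, mul_comm]
    calc ∑ S ∈ W.powersetCard m1,
          (∏ x ∈ S, ∏ k, (x - v k)) *
          ((∏ x ∈ W \ S, ∏ j, (x - u j)) * (∏ x ∈ W \ S, ∏ y ∈ S, (x - y)⁻¹))
        = P.eval (v (Fin.last m2)) := by
          rw [hPeval]
          refine Finset.sum_congr rfl (fun S _ => ?_)
          congr 1
          exact Finset.prod_congr rfl (fun x _ => hL x)
      _ = Q.eval (v (Fin.last m2)) := by rw [hPQ]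
      _ = ∏ j, ∏ k, (u j - v k) := by
          rw [hQeval]
          rw [show (fun j => ∏ k : Fin (m2+1), (u j - v k))
              = (fun j => (∏ k : Fin m2, (u j - v' k)) * (u j - v (Fin.last m2)))
            from funext (fun j => by rw [Fin.prod_univ_castSucc])]
          rw [Finset.prod_mul_distrib, ← he]

lemma core2 (c : ℂ) (hc : c ≠ 0) (m1 m2 : ℕ) (u : Fin m1 → ℂ) (v : Fin m2 → ℂ)
    (W : Finset ℂ) (hW : W.card = m1 + m2)
    (hwu : ∀ x ∈ W, ∀ j, x ≠ u j) (hwv : ∀ x ∈ W, ∀ k, x ≠ v k)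
    (huv : ∀ j k, u j ≠ v k) :
    ∑ S ∈ W.powersetCard m1,
      (∏ x ∈ S, ∏ j, gg c x (u j)) * (∏ x ∈ W \ S, ∏ k, gg c x (v k)) *
      (∏ x ∈ W \ S, ∏ y ∈ S, gg c x y) =
    (∏ x ∈ W, ∏ j, gg c x (u j)) * (∏ x ∈ W, ∏ k, gg c x (v k)) /
      (∏ j, ∏ k, gg c (u j) (v k)) := by
  have hsplitT : ∀ (T : Finset ℂ) (m : ℕ) (f : Fin m → ℂ),
      (∏ x ∈ T, ∏ j, gg c x (f j)) = c ^ (m * T.card) / (∏ x ∈ T, ∏ j, (x - f j)) := by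
    intro T m f
    calc ∏ x ∈ T, ∏ j, gg c x (f j)
        = ∏ x ∈ T, (c ^ m / ∏ j, (x - f j)) := by
          refine Finset.prod_congr rfl fun x _ => ?_
          simp only [gg]
          rw [Finset.prod_div_distrib, Finset.prod_const, card_univ, Fintype.card_fin]
      _ = (∏ _x ∈ T, c ^ m) / (∏ x ∈ T, ∏ j, (x - f j)) := Finset.prod_div_distrib _ _
      _ = _ := by rw [Finset.prod_const, ← pow_mul]
  have hsplit2 : ∀ (T S' : Finset ℂ),
      (∏ x ∈ T, ∏ y ∈ S', gg c x y) = c ^ (S'.card * T.card) / (∏ x ∈ T, ∏ y ∈ S', (x - y)) := by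
    intro T S'
    calc ∏ x ∈ T, ∏ y ∈ S', gg c x y
        = ∏ x ∈ T, (c ^ S'.card / ∏ y ∈ S', (x - y)) := by
          refine Finset.prod_congr rfl fun x _ => ?_
          simp only [gg]
          rw [Finset.prod_div_distrib, Finset.prod_const]
      _ = (∏ _x ∈ T, c ^ S'.card) / (∏ x ∈ T, ∏ y ∈ S', (x - y)) := Finset.prod_div_distrib _ _
      _ = _ := by rw [Finset.prod_const, ← pow_mul]
  have huvsplit : (∏ j, ∏ k, gg c (u j) (v k))
      = c ^ (m2 * m1) / (∏ j, ∏ k, (u j - v k)) := by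
    calc ∏ j, ∏ k, gg c (u j) (v k)
        = ∏ j, (c ^ m2 / ∏ k, (u j - v k)) := by
          refine Finset.prod_congr rfl fun j _ => ?_
          simp only [gg]
          rw [Finset.prod_div_distrib, Finset.prod_const, card_univ, Fintype.card_fin]
      _ = (∏ _j : Fin m1, c ^ m2) / (∏ j, ∏ k, (u j - v k)) := Finset.prod_div_distrib _ _
      _ = _ := by rw [Finset.prod_const, ← pow_mul, card_univ, Fintype.card_fin]
  set A := ∏ x ∈ W, ∏ j, (x - u j) with hA
  set B := ∏ x ∈ W, ∏ k, (x - v k) with hB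
  set e := ∏ j, ∏ k, (u j - v k) with he
  have hAne : ∀ T ⊆ W, (∏ x ∈ T, ∏ j, (x - u j)) ≠ 0 := by
    intro T hT
    rw [Finset.prod_ne_zero_iff]
    intro x hx
    rw [Finset.prod_ne_zero_iff]
    intro j _
    exact sub_ne_zero.2 (hwu x (hT hx) j)
  have hBne : ∀ T ⊆ W, (∏ x ∈ T, ∏ k, (x - v k)) ≠ 0 := by
    intro T hT
    rw [Finset.prod_ne_zero_iff]
    intro x hx
    rw [Finset.prod_ne_zero_iff]
    intro k _
    exact sub_ne_zero.2 (hwv x (hT hx) k)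
  have hene : e ≠ 0 := by
    rw [he, Finset.prod_ne_zero_iff]
    intro j _
    rw [Finset.prod_ne_zero_iff]
    intro k _
    exact sub_ne_zero.2 (huv j k)
  set K := c ^ (m1 * m1 + m2 * m2 + m1 * m2) * (A * B)⁻¹ with hK
  have hterm : ∀ S ∈ W.powersetCard m1,
      (∏ x ∈ S, ∏ j, gg c x (u j)) * (∏ x ∈ W \ S, ∏ k, gg c x (v k)) *
        (∏ x ∈ W \ S, ∏ y ∈ S, gg c x y) =
      K * ((∏ x ∈ S, ∏ k, (x - v k)) *
        ((∏ x ∈ W \ S, ∏ j, (x - u j)) * (∏ x ∈ W \ S, ∏ y ∈ S, (x - y)⁻¹))) := by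
    intro S hS
    rw [mem_powersetCard] at hS
    obtain ⟨hSsub, hScard⟩ := hS
    have hcard2 : (W \ S).card = m2 := by
      rw [card_sdiff_of_subset hSsub, hW, hScard]; omega
    have hdne : (∏ x ∈ W \ S, ∏ y ∈ S, (x - y)) ≠ 0 := by
      rw [Finset.prod_ne_zero_iff]
      intro x hx
      rw [Finset.prod_ne_zero_iff]
      intro y hy
      have : x ≠ y := fun h => (mem_sdiff.1 hx).2 (h ▸ hy)
      exact sub_ne_zero.2 this
    have ha := hAne S hSsub
    have ha' := hAne (W \ S) (sdiff_subset)
    have hb := hBne S hSsub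
    have hb' := hBne (W \ S) (sdiff_subset)
    have hsplitA : A = (∏ x ∈ W \ S, ∏ j, (x - u j)) * (∏ x ∈ S, ∏ j, (x - u j)) :=
      (Finset.prod_sdiff hSsub).symm
    have hsplitB : B = (∏ x ∈ W \ S, ∏ k, (x - v k)) * (∏ x ∈ S, ∏ k, (x - v k)) :=
      (Finset.prod_sdiff hSsub).symm
    rw [hsplitT S m1 u, hsplitT (W \ S) m2 v, hsplit2 (W \ S) S, hScard, hcard2,
        hK, hsplitA, hsplitB]
    have hinv : (∏ x ∈ W \ S, ∏ y ∈ S, (x - y)⁻¹) = (∏ x ∈ W \ S, ∏ y ∈ S, (x - y))⁻¹ := by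
      rw [← Finset.prod_inv_distrib]
      exact Finset.prod_congr rfl fun x _ => Finset.prod_inv_distrib _
    rw [hinv]
    field_simp
    ring
  rw [Finset.sum_congr rfl hterm, ← Finset.mul_sum, core m1 u m2 v W hW]
  rw [hsplitT W m1 u, hsplitT W m2 v, huvsplit, hW, ← hA, ← hB, ← he, hK]
  have hAne' : A ≠ 0 := hAne W (subset_refl W)
  have hBne' : B ≠ 0 := hBne W (subset_refl W)
  field_simp
  ring

theorem sum_partitions_g (c : ℂ) (hc : c ≠ 0) (m1 m2 : ℕ)
    (u : Fin m1 → ℂ) (v : Fin m2 → ℂ) (w : Fin (m1 + m2) → ℂ)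
    (hw : Function.Injective w)
    (hwu : ∀ i j, w i ≠ u j) (hwv : ∀ i j, w i ≠ v j)
    (huv : ∀ j k, u j ≠ v k) :
    ∑ S ∈ powersetCard m1 (univ : Finset (Fin (m1 + m2))),
        (∏ i ∈ S, ∏ j, gg c (w i) (u j)) *
        (∏ i ∈ Sᶜ, ∏ j, gg c (w i) (v j)) *
        (∏ i ∈ Sᶜ, ∏ i' ∈ S, gg c (w i) (w i')) =
      (∏ i, ∏ j, gg c (w i) (u j)) * (∏ i, ∏ j, gg c (w i) (v j)) /
        (∏ j, ∏ k, gg c (u j) (v k)) := by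
  set W : Finset ℂ := (univ : Finset (Fin (m1 + m2))).image w with hWdef
  have hWcard : W.card = m1 + m2 := by
    rw [hWdef, card_image_of_injective _ hw, card_univ, Fintype.card_fin]
  have hwu' : ∀ x ∈ W, ∀ j, x ≠ u j := by
    intro x hx j
    obtain ⟨i, _, rfl⟩ := Finset.mem_image.1 hx
    exact hwu i j
  have hwv' : ∀ x ∈ W, ∀ k, x ≠ v k := by
    intro x hx k
    obtain ⟨i, _, rfl⟩ := Finset.mem_image.1 hx
    exact hwv i k
  have h2 := core2 c hc m1 m2 u v W hWcard hwu' hwv' huv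
  have hinj : ∀ (S : Finset (Fin (m1 + m2))), ∀ x ∈ S, ∀ y ∈ S, w x = w y → x = y :=
    fun S x _ y _ h => hw h
  have hcompl : ∀ (S : Finset (Fin (m1 + m2))), (Sᶜ : Finset _).image w = W \ S.image w := by
    intro S
    rw [compl_eq_univ_sdiff, hWdef, Finset.image_sdiff _ _ hw]
  calc ∑ S ∈ powersetCard m1 (univ : Finset (Fin (m1 + m2))),
        (∏ i ∈ S, ∏ j, gg c (w i) (u j)) *
        (∏ i ∈ Sᶜ, ∏ j, gg c (w i) (v j)) *
        (∏ i ∈ Sᶜ, ∏ i' ∈ S, gg c (w i) (w i'))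
      = ∑ T ∈ W.powersetCard m1,
        (∏ x ∈ T, ∏ j, gg c x (u j)) * (∏ x ∈ W \ T, ∏ k, gg c x (v k)) *
        (∏ x ∈ W \ T, ∏ y ∈ T, gg c x y) := by
        refine Finset.sum_bij (fun S _ => S.image w) ?_ ?_ ?_ ?_
        · intro S hS
          rw [mem_powersetCard] at hS ⊢
          exact ⟨Finset.image_subset_image hS.1, by rw [card_image_of_injective _ hw, hS.2]⟩
        · intro S₁ _ S₂ _ h
          exact Finset.image_injective hw h
        · intro T hT
          rw [mem_powersetCard] at hT
          obtain ⟨S, hSsub, hSim⟩ := Finset.subset_image_iff.1 hT.1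
          refine ⟨S, mem_powersetCard.2 ⟨subset_univ S, ?_⟩, hSim⟩
          rw [← card_image_of_injective S hw, hSim, hT.2]
        · intro S _
          beta_reduce
          rw [← hcompl S, Finset.prod_image (hinj S), Finset.prod_image (hinj Sᶜ),
              Finset.prod_image (hinj Sᶜ)]
          congr 1
          refine Finset.prod_congr rfl fun i _ => ?_
          rw [Finset.prod_image (hinj S)]
    _ = (∏ x ∈ W, ∏ j, gg c x (u j)) * (∏ x ∈ W, ∏ k, gg c x (v k)) /
        (∏ j, ∏ k, gg c (u j) (v k)) := h2
    _ = (∏ i, ∏ j, gg c (w i) (u j)) * (∏ i, ∏ j, gg c (w i) (v j)) /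
        (∏ j, ∏ k, gg c (u j) (v k)) := by
        rw [hWdef, Finset.prod_image (hinj univ), Finset.prod_image (hinj univ)]
end

section
/- Block determinant merging identity: for functions A_1,…,A_a and B_1,…,B_b of one variable and a set x̄ of a+b generic complex numbers, ∑_{x̄ ⇒ {x̄_I, x̄_II}, #x̄_I=a, #x̄_II=b} g(x̄_II, x̄_I) Δ_a(x̄_I) det_a(A_j(x_{I_k})) Δ_b(x̄_II) det_b(B_j(x_{II_k})) = Δ_{a+b}(x̄) det_{a+b} of the block matrix whose first a rows are A_j(x_k) and last b rows are B_j(x_k). -/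
open Finset Equiv

section
variable {a b : ℕ}

lemma card_compl_b {S : Finset (Fin (a + b))} (h : S.card = a) : Sᶜ.card = b := by
  simp [Finset.card_compl, h]

noncomputable def blockPerm (S : Finset (Fin (a + b))) (h : S.card = a) :
    Equiv.Perm (Fin (a + b)) :=
  Equiv.ofBijective
    (Fin.addCases (motive := fun _ => Fin (a + b))
      (S.orderEmbOfFin h) (Sᶜ.orderEmbOfFin (card_compl_b h)))
    (by
      rw [Fintype.bijective_iff_injective_and_card]
      refine ⟨?_, rfl⟩
      intro i j hij
      induction i using Fin.addCases with
      | left i =>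
        induction j using Fin.addCases with
        | left j =>
          simp only [Fin.addCases_left] at hij
          exact congrArg _ ((S.orderEmbOfFin h).injective hij)
        | right j =>
          simp only [Fin.addCases_left, Fin.addCases_right] at hij
          have h1 := S.orderEmbOfFin_mem h i
          have h2 := Sᶜ.orderEmbOfFin_mem (card_compl_b h) j
          rw [Finset.mem_compl] at h2
          rw [hij] at h1
          exact absurd h1 h2
      | right i =>
        induction j using Fin.addCases with
        | left j =>
          simp only [Fin.addCases_left, Fin.addCases_right] at hij
          have h1 := S.orderEmbOfFin_mem h j
          have h2 := Sᶜ.orderEmbOfFin_mem (card_compl_b h) i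
          rw [Finset.mem_compl] at h2
          rw [← hij] at h1
          exact absurd h1 h2
        | right j =>
          simp only [Fin.addCases_right] at hij
          exact congrArg _ ((Sᶜ.orderEmbOfFin (card_compl_b h)).injective hij))

@[simp] lemma blockPerm_castAdd (S : Finset (Fin (a + b))) (h : S.card = a) (i : Fin a) :
    blockPerm S h (Fin.castAdd b i) = S.orderEmbOfFin h i := by
  simp [blockPerm, Equiv.ofBijective]

@[simp] lemma blockPerm_natAdd (S : Finset (Fin (a + b))) (h : S.card = a) (i : Fin b) :
    blockPerm S h (Fin.natAdd a i) = Sᶜ.orderEmbOfFin (card_compl_b h) i := by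
  simp [blockPerm, Equiv.ofBijective]

end

lemma prod_pairs_det {n : ℕ} (z : Fin n → ℂ) :
    ∏ j, ∏ k ∈ univ.filter (fun k => k < j), (z j - z k) = (Matrix.vandermonde z).det := by
  rw [Matrix.det_vandermonde]
  exact Finset.prod_comm' (by simp)

lemma prod_pairs_perm {n : ℕ} (y : Fin n → ℂ) (σ : Equiv.Perm (Fin n)) :
    ∏ j, ∏ k ∈ univ.filter (fun k => k < j), (y (σ j) - y (σ k))
      = ((Equiv.Perm.sign σ : ℤ) : ℂ) *
        ∏ j, ∏ k ∈ univ.filter (fun k => k < j), (y j - y k) := by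
  rw [prod_pairs_det, prod_pairs_det]
  have h : Matrix.vandermonde (fun i => y (σ i))
      = (Matrix.vandermonde y).submatrix σ id := rfl
  rw [h, Matrix.det_permute]

lemma gg_prod_perm (c : ℂ) {n : ℕ} (y : Fin n → ℂ) (σ : Equiv.Perm (Fin n)) :
    ∏ j, ∏ k ∈ univ.filter (fun k => k < j), gg c (y (σ j)) (y (σ k))
      = ((Equiv.Perm.sign σ : ℤ) : ℂ) *
        ∏ j, ∏ k ∈ univ.filter (fun k => k < j), gg c (y j) (y k) := by
  have key := prod_pairs_perm y σ
  simp only [gg, Finset.prod_div_distrib, Finset.prod_const]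
  rw [key]
  rcases Int.units_eq_one_or (Equiv.Perm.sign σ) with hs | hs <;> rw [hs]
  · push_cast; ring
  · push_cast
    rw [neg_one_mul, div_neg, neg_one_mul]

lemma prod_pairs_split {a b : ℕ} (f : Fin (a + b) → Fin (a + b) → ℂ) :
    ∏ j, ∏ k ∈ univ.filter (fun k => k < j), f j k
      = ((∏ j : Fin a, ∏ k ∈ univ.filter (fun k => k < j),
            f (Fin.castAdd b j) (Fin.castAdd b k)) *
         (∏ j : Fin b, ∏ k ∈ univ.filter (fun k => k < j),
            f (Fin.natAdd a j) (Fin.natAdd a k))) *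
        ∏ j : Fin b, ∏ k : Fin a, f (Fin.natAdd a j) (Fin.castAdd b k) := by
  simp only [Finset.prod_filter, Fin.prod_univ_add]
  have e1 : ∀ j : Fin a, (∏ k : Fin b,
      if Fin.natAdd a k < Fin.castAdd b j then f (Fin.castAdd b j) (Fin.natAdd a k) else 1) = 1 := by
    intro j
    apply Finset.prod_eq_one
    intro k _
    rw [if_neg]
    simp only [Fin.lt_def, Fin.coe_natAdd, Fin.coe_castAdd]
    omega
  have e2 : ∀ j : Fin b, (∏ k : Fin a,
      if Fin.castAdd b k < Fin.natAdd a j then f (Fin.natAdd a j) (Fin.castAdd b k) else 1)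
      = ∏ k : Fin a, f (Fin.natAdd a j) (Fin.castAdd b k) := by
    intro j
    apply Finset.prod_congr rfl
    intro k _
    rw [if_pos]
    simp only [Fin.lt_def, Fin.coe_natAdd, Fin.coe_castAdd]
    omega
  have e3 : ∀ (j k : Fin a), (Fin.castAdd b k < Fin.castAdd b j) ↔ (k < j) := by
    intro j k
    rw [Fin.lt_def, Fin.lt_def]
    simp only [Fin.coe_castAdd]
  have e4 : ∀ (j k : Fin b), (Fin.natAdd a k < Fin.natAdd a j) ↔ (k < j) := by
    intro j k
    rw [Fin.lt_def, Fin.lt_def]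
    simp only [Fin.coe_natAdd]
    omega
  simp only [e1, e2, e3, e4, mul_one, Finset.prod_mul_distrib]
  ring

lemma prod_orderEmbOfFin' {k : ℕ} {M : Type*} [CommMonoid M] (s : Finset (Fin k)) {m : ℕ}
    (h : s.card = m) (f : Fin k → M) :
    ∏ i : Fin m, f (s.orderEmbOfFin h i) = ∏ x ∈ s, f x := by
  rw [← Finset.prod_coe_sort s f]
  rw [← Equiv.prod_comp (s.orderIsoOfFin h).toEquiv (fun z => f z.1)]
  apply Finset.prod_congr rfl
  intro i _
  simp [Finset.coe_orderIsoOfFin_apply]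

lemma gg_split (c : ℂ) {a b : ℕ} (x : Fin (a + b) → ℂ) (S : Finset (Fin (a + b)))
    (h : S.card = a) :
    (∏ i ∈ Sᶜ, ∏ i' ∈ S, gg c (x i) (x i')) *
      (∏ j : Fin a, ∏ k ∈ univ.filter (fun k => k < j),
        gg c (x (S.orderEmbOfFin h j)) (x (S.orderEmbOfFin h k))) *
      (∏ j : Fin b, ∏ k ∈ univ.filter (fun k => k < j),
        gg c (x (Sᶜ.orderEmbOfFin (card_compl_b h) j)) (x (Sᶜ.orderEmbOfFin (card_compl_b h) k)))
      = ((Equiv.Perm.sign (blockPerm S h) : ℤ) : ℂ) *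
        ∏ j, ∏ k ∈ univ.filter (fun k => k < j), gg c (x j) (x k) := by
  rw [← gg_prod_perm c x (blockPerm S h)]
  rw [prod_pairs_split (fun j k => gg c (x (blockPerm S h j)) (x (blockPerm S h k)))]
  simp only [blockPerm_castAdd, blockPerm_natAdd]
  have hmix : (∏ j : Fin b, ∏ k : Fin a,
      gg c (x (Sᶜ.orderEmbOfFin (card_compl_b h) j)) (x (S.orderEmbOfFin h k)))
      = ∏ i ∈ Sᶜ, ∏ i' ∈ S, gg c (x i) (x i') := by
    have step : ∀ j : Fin b, (∏ k : Fin a,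
        gg c (x (Sᶜ.orderEmbOfFin (card_compl_b h) j)) (x (S.orderEmbOfFin h k)))
        = ∏ i' ∈ S, gg c (x (Sᶜ.orderEmbOfFin (card_compl_b h) j)) (x i') := fun j =>
      prod_orderEmbOfFin' S h (fun t => gg c (x (Sᶜ.orderEmbOfFin (card_compl_b h) j)) (x t))
    simp only [step]
    exact prod_orderEmbOfFin' Sᶜ (card_compl_b h) (fun i => ∏ i' ∈ S, gg c (x i) (x i'))
  rw [hmix]
  ring

variable {a b : ℕ}

lemma det_eq_sum_perm {m : ℕ} (M : Matrix (Fin m) (Fin m) ℂ) :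
    M.det = ∑ σ : Equiv.Perm (Fin m), ((Equiv.Perm.sign σ : ℤ) : ℂ) * ∏ i, M i (σ i) := by
  rw [← Matrix.det_transpose, Matrix.det_apply']
  rfl

noncomputable def eppi (π : Equiv.Perm (Fin a) × Equiv.Perm (Fin b)) : Equiv.Perm (Fin (a + b)) :=
  Equiv.permCongr finSumFinEquiv (Equiv.sumCongr π.1 π.2)

@[simp] lemma eppi_castAdd (π : Equiv.Perm (Fin a) × Equiv.Perm (Fin b)) (k : Fin a) :
    eppi π (Fin.castAdd b k) = Fin.castAdd b (π.1 k) := by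
  simp [eppi, Equiv.permCongr_apply]

@[simp] lemma eppi_natAdd (π : Equiv.Perm (Fin a) × Equiv.Perm (Fin b)) (k : Fin b) :
    eppi π (Fin.natAdd a k) = Fin.natAdd a (π.2 k) := by
  simp [eppi, Equiv.permCongr_apply]

lemma eppi_injective : Function.Injective (eppi (a := a) (b := b)) := by
  intro π ρ h
  have h1 : π.1 = ρ.1 := by
    apply Equiv.ext
    intro k
    have := congrArg (fun σ : Equiv.Perm (Fin (a + b)) => σ (Fin.castAdd b k)) h
    simp only [eppi_castAdd, Fin.castAdd_inj] at this
    exact this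
  have h2 : π.2 = ρ.2 := by
    apply Equiv.ext
    intro k
    have := congrArg (fun σ : Equiv.Perm (Fin (a + b)) => σ (Fin.natAdd a k)) h
    simp only [eppi_natAdd] at this
    have := congrArg Fin.val this
    simp only [Fin.coe_natAdd] at this
    exact Fin.ext (by omega)
  exact Prod.ext h1 h2

lemma eppi_sign (π : Equiv.Perm (Fin a) × Equiv.Perm (Fin b)) :
    Equiv.Perm.sign (eppi π) = Equiv.Perm.sign π.1 * Equiv.Perm.sign π.2 := by
  rw [eppi, Equiv.Perm.sign_permCongr, Equiv.Perm.sign_sumCongr]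

noncomputable def Phi : (Σ _ : {S : Finset (Fin (a + b)) // S.card = a},
    Equiv.Perm (Fin a) × Equiv.Perm (Fin b)) → Equiv.Perm (Fin (a + b)) :=
  fun p => blockPerm p.1.1 p.1.2 * eppi p.2

lemma Phi_castAdd (p : (Σ _ : {S : Finset (Fin (a + b)) // S.card = a},
    Equiv.Perm (Fin a) × Equiv.Perm (Fin b))) (k : Fin a) :
    Phi p (Fin.castAdd b k) = p.1.1.orderEmbOfFin p.1.2 (p.2.1 k) := by
  simp [Phi, Equiv.Perm.mul_apply]

lemma Phi_natAdd (p : (Σ _ : {S : Finset (Fin (a + b)) // S.card = a},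
    Equiv.Perm (Fin a) × Equiv.Perm (Fin b))) (k : Fin b) :
    Phi p (Fin.natAdd a k) = (p.1.1ᶜ).orderEmbOfFin (card_compl_b p.1.2) (p.2.2 k) := by
  simp [Phi, Equiv.Perm.mul_apply]

lemma image_Phi (p : (Σ _ : {S : Finset (Fin (a + b)) // S.card = a},
    Equiv.Perm (Fin a) × Equiv.Perm (Fin b))) :
    (Finset.univ.image fun k : Fin a => Phi p (Fin.castAdd b k)) = p.1.1 := by
  apply Finset.eq_of_subset_of_card_le
  · intro z hz
    simp only [Finset.mem_image, Finset.mem_univ, true_and] at hz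
    obtain ⟨k, rfl⟩ := hz
    rw [Phi_castAdd]
    exact Finset.orderEmbOfFin_mem _ _ _
  · have hinj : Function.Injective fun k : Fin a => Phi p (Fin.castAdd b k) :=
      fun i j hij => (Fin.castAdd_injective a b) ((Phi p).injective hij)
    rw [Finset.card_image_of_injective _ hinj, Finset.card_univ, Fintype.card_fin, p.1.2]

lemma Phi_bijective : Function.Bijective (Phi (a := a) (b := b)) := by
  rw [Fintype.bijective_iff_injective_and_card]
  constructor
  · intro p q h
    have hS : p.1 = q.1 := Subtype.ext (by rw [← image_Phi p, ← image_Phi q, h])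
    obtain ⟨⟨S, hSc⟩, π⟩ := p
    obtain ⟨⟨T, hTc⟩, ρ⟩ := q
    cases hS
    simp only [Phi] at h
    have := eppi_injective (mul_left_cancel h)
    rw [this]
  · rw [Fintype.card_sigma]
    simp only [Finset.sum_const, Finset.card_univ, Fintype.card_prod, Fintype.card_perm,
      Fintype.card_finset_len, Fintype.card_fin, smul_eq_mul]
    rw [← Nat.choose_mul_factorial_mul_factorial (Nat.le_add_right a b)]
    have : a + b - a = b := by omega
    rw [this]
    ring

lemma laplace (M : Matrix (Fin (a + b)) (Fin (a + b)) ℂ) :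
    M.det = ∑ S : {S : Finset (Fin (a + b)) // S.card = a},
      ((Equiv.Perm.sign (blockPerm S.1 S.2) : ℤ) : ℂ) *
      (Matrix.det (Matrix.of fun j k : Fin a => M (Fin.castAdd b j) (S.1.orderEmbOfFin S.2 k)) *
       Matrix.det (Matrix.of fun j k : Fin b =>
         M (Fin.natAdd a j) ((S.1ᶜ).orderEmbOfFin (card_compl_b S.2) k))) := by
  rw [det_eq_sum_perm]
  rw [← Fintype.sum_bijective Phi Phi_bijective
      (fun p => ((Equiv.Perm.sign (Phi p) : ℤ) : ℂ) * ∏ i, M i (Phi p i))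
      (fun σ => ((Equiv.Perm.sign σ : ℤ) : ℂ) * ∏ i, M i (σ i)) (fun p => rfl)]
  rw [← Finset.univ_sigma_univ, Finset.sum_sigma]
  apply Finset.sum_congr rfl
  intro S _
  rw [← Finset.univ_product_univ, Finset.sum_product]
  rw [det_eq_sum_perm, det_eq_sum_perm, Finset.sum_mul_sum, Finset.mul_sum]
  apply Finset.sum_congr rfl
  intro πa _
  rw [Finset.mul_sum]
  apply Finset.sum_congr rfl
  intro πb _
  have hsgn : Equiv.Perm.sign (Phi ⟨S, (πa, πb)⟩)
      = Equiv.Perm.sign (blockPerm S.1 S.2) * (Equiv.Perm.sign πa * Equiv.Perm.sign πb) := by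
    rw [Phi, map_mul, eppi_sign]
  have hprod : (∏ i, M i (Phi ⟨S, (πa, πb)⟩ i))
      = (∏ k : Fin a, M (Fin.castAdd b k) (S.1.orderEmbOfFin S.2 (πa k))) *
        ∏ k : Fin b, M (Fin.natAdd a k) ((S.1ᶜ).orderEmbOfFin (card_compl_b S.2) (πb k)) := by
    rw [Fin.prod_univ_add]
    congr 1
    · exact Finset.prod_congr rfl fun k _ => by rw [Phi_castAdd]
    · exact Finset.prod_congr rfl fun k _ => by rw [Phi_natAdd]
  rw [hsgn, hprod]
  simp only [Units.val_mul, Int.cast_mul, Matrix.of_apply]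
  ring

theorem block_det_merge (c : ℂ) (hc : c ≠ 0) (a b : ℕ)
    (A : Fin a → ℂ → ℂ) (B : Fin b → ℂ → ℂ)
    (x : Fin (a + b) → ℂ) (hx : Function.Injective x) :
    (∑ S : Finset (Fin (a + b)),
        if h : S.card = a then
          (∏ i ∈ Sᶜ, ∏ i' ∈ S, gg c (x i) (x i')) *
          ((∏ j, ∏ k ∈ univ.filter (fun k => k < j),
              gg c (x (S.orderEmbOfFin h j)) (x (S.orderEmbOfFin h k))) *
            Matrix.det (Matrix.of fun (j k : Fin a) => A j (x (S.orderEmbOfFin h k)))) *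
          ((∏ j : Fin b, ∏ k ∈ univ.filter (fun k => k < j),
              gg c (x (Sᶜ.orderEmbOfFin
                (by simp [Finset.card_compl, h]) j))
                (x (Sᶜ.orderEmbOfFin
                (by simp [Finset.card_compl, h]) k))) *
            Matrix.det (Matrix.of fun (j k : Fin b) =>
              B j (x (Sᶜ.orderEmbOfFin
                (by simp [Finset.card_compl, h]) k))))
        else 0) =
      (∏ j, ∏ k ∈ univ.filter (fun k => k < j), gg c (x j) (x k)) *
      Matrix.det (Matrix.of fun (i k : Fin (a + b)) =>
        Fin.addCases (motive := fun _ => ℂ)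
          (fun j => A j (x k)) (fun j => B j (x k)) i) := by
  classical
  rw [laplace (Matrix.of fun (i k : Fin (a + b)) =>
    Fin.addCases (motive := fun _ => ℂ) (fun j => A j (x k)) (fun j => B j (x k)) i)]
  rw [Finset.mul_sum]
  rw [← Finset.sum_filter_of_ne (p := fun S : Finset (Fin (a + b)) => S.card = a)
      (fun S _ hne => by
        by_contra hna
        exact hne (dif_neg hna))]
  rw [Finset.sum_subtype (p := fun S : Finset (Fin (a + b)) => S.card = a)
      (Finset.univ.filter (fun S : Finset (Fin (a + b)) => S.card = a))
      (by simp)]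
  apply Finset.sum_congr rfl
  intro S _
  rw [dif_pos S.2]
  have hA : (Matrix.of fun (j k : Fin a) =>
        (Matrix.of fun (i k : Fin (a + b)) => Fin.addCases (motive := fun _ => ℂ)
          (fun j => A j (x k)) (fun j => B j (x k)) i)
        (Fin.castAdd b j) (S.1.orderEmbOfFin S.2 k))
      = Matrix.of fun (j k : Fin a) => A j (x (S.1.orderEmbOfFin S.2 k)) := by
    ext j k
    simp [Fin.addCases_left]
  have hB : (Matrix.of fun (j k : Fin b) =>
        (Matrix.of fun (i k : Fin (a + b)) => Fin.addCases (motive := fun _ => ℂ)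
          (fun j => A j (x k)) (fun j => B j (x k)) i)
        (Fin.natAdd a j) ((S.1ᶜ).orderEmbOfFin (card_compl_b S.2) k))
      = Matrix.of fun (j k : Fin b) => B j (x ((S.1ᶜ).orderEmbOfFin (card_compl_b S.2) k)) := by
    ext j k
    simp [Fin.addCases_right]
  rw [hA, hB]
  have key := gg_split c x S.1 S.2
  linear_combination ((Matrix.of fun (j k : Fin a) => A j (x (S.1.orderEmbOfFin S.2 k))).det *
    (Matrix.of fun (j k : Fin b) => B j (x ((S.1ᶜ).orderEmbOfFin (card_compl_b S.2) k))).det) * key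
end
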